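/- arXiv:1007.0733 — 7 statements merged into one kernel-verified Lean document; each statement's English description precedes it below -/
import Mathlib

section
/- For any δ > 0 there exists a constant C_δ such that for all T > 0, the sum over all integers j of 2^{j/2} (1+2^j)^{-1/2-δ} (ln(2+2^j T))^{1/2} is at most C_δ (ln(2+T))^{1/2}. -/
open Real

noncomputable def cdy (δ : ℝ) (j : ℤ) : ℝ :=
  (2:ℝ) ^ ((j:ℝ)/2) * (1 + (2:ℝ) ^ (j:ℝ)) ^ (-(1/2:ℝ) - δ) * (1 + Real.sqrt (max (j:ℝ) 0))

lemma cdy_nonneg (δ : ℝ) (j : ℤ) : 0 ≤ cdy δ j := by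
  unfold cdy; positivity

lemma sqrt_add_le' {x y : ℝ} (hx : 0 ≤ x) (hy : 0 ≤ y) :
    Real.sqrt (x + y) ≤ Real.sqrt x + Real.sqrt y := by
  rw [show x + y = Real.sqrt x ^ 2 + Real.sqrt y ^ 2 by
    rw [Real.sq_sqrt hx, Real.sq_sqrt hy]]
  have h : Real.sqrt x ^ 2 + Real.sqrt y ^ 2 ≤ (Real.sqrt x + Real.sqrt y) ^ 2 := by
    nlinarith [Real.sqrt_nonneg x, Real.sqrt_nonneg y]
  calc Real.sqrt (Real.sqrt x ^ 2 + Real.sqrt y ^ 2)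
      ≤ Real.sqrt ((Real.sqrt x + Real.sqrt y) ^ 2) := Real.sqrt_le_sqrt h
    _ = Real.sqrt x + Real.sqrt y := Real.sqrt_sq (by positivity)

lemma cdy_summable (δ : ℝ) (hδ : 0 < δ) : Summable (cdy δ) := by
  set r : ℝ := (2:ℝ) ^ (-δ) with hr
  have hr0 : 0 < r := Real.rpow_pos_of_pos (by norm_num) _
  have hr1 : r < 1 := Real.rpow_lt_one_of_one_lt_of_neg (by norm_num) (by linarith)
  apply Summable.of_nat_of_neg
  · apply Summable.of_nonneg_of_le (f := fun n : ℕ => 2 * r ^ n + (n:ℝ) * r ^ n)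
      (fun n => cdy_nonneg δ n)
    · intro n
      unfold cdy
      push_cast
      have hb : (2:ℝ) ^ ((n:ℝ)/2) * (1 + (2:ℝ) ^ (n:ℝ)) ^ (-(1/2:ℝ) - δ) ≤ r ^ n := by
        have h1 : (1 + (2:ℝ) ^ (n:ℝ)) ^ (-(1/2:ℝ) - δ) ≤ ((2:ℝ) ^ (n:ℝ)) ^ (-(1/2:ℝ) - δ) :=
          Real.rpow_le_rpow_of_nonpos (Real.rpow_pos_of_pos (by norm_num) _)
            (by linarith [Real.rpow_pos_of_pos (show (0:ℝ)<2 by norm_num) (n:ℝ)]) (by linarith)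
        have h2 : (2:ℝ) ^ ((n:ℝ)/2) * ((2:ℝ) ^ (n:ℝ)) ^ (-(1/2:ℝ) - δ) = r ^ n := by
          rw [← Real.rpow_natCast r n, hr, ← Real.rpow_mul (by norm_num),
            ← Real.rpow_mul (by norm_num), ← Real.rpow_add (by norm_num)]
          ring_nf
        calc (2:ℝ) ^ ((n:ℝ)/2) * (1 + (2:ℝ) ^ (n:ℝ)) ^ (-(1/2:ℝ) - δ)
            ≤ (2:ℝ) ^ ((n:ℝ)/2) * ((2:ℝ) ^ (n:ℝ)) ^ (-(1/2:ℝ) - δ) :=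
              mul_le_mul_of_nonneg_left h1 (by positivity)
          _ = r ^ n := h2
      have hs : 1 + Real.sqrt (max (n:ℝ) 0) ≤ 2 + (n:ℝ) := by
        rw [max_eq_left (by positivity)]
        have : Real.sqrt (n:ℝ) ≤ 1 + (n:ℝ) := by
          rcases le_total (n:ℝ) 1 with h | h
          · have h1 := Real.sqrt_le_sqrt h
            rw [Real.sqrt_one] at h1
            linarith [Nat.cast_nonneg (α := ℝ) n]
          · have h2 : Real.sqrt (n:ℝ) ≤ Real.sqrt ((n:ℝ)^2) :=
              Real.sqrt_le_sqrt (by nlinarith)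
            rw [Real.sqrt_sq (by positivity)] at h2
            linarith [Nat.cast_nonneg (α := ℝ) n]
        linarith
      calc (2:ℝ) ^ ((n:ℝ)/2) * (1 + (2:ℝ) ^ (n:ℝ)) ^ (-(1/2:ℝ) - δ) * (1 + Real.sqrt (max (n:ℝ) 0))
          ≤ r ^ n * (2 + (n:ℝ)) :=
            mul_le_mul hb hs (by positivity) (by positivity)
        _ = 2 * r ^ n + (n:ℝ) * r ^ n := by ring
    · have h1 : Summable (fun n : ℕ => 2 * r ^ n) :=
        (summable_geometric_of_lt_one hr0.le hr1).mul_left 2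
      have h2 : Summable (fun n : ℕ => (n:ℝ) * r ^ n) := by
        have := summable_pow_mul_geometric_of_norm_lt_one (R := ℝ) 1
          (by rw [Real.norm_eq_abs, abs_of_pos hr0]; exact hr1)
        simpa using this
      exact h1.add h2
  · apply Summable.of_nonneg_of_le (f := fun n : ℕ => ((2:ℝ) ^ (-(1/2:ℝ))) ^ n)
      (fun n => cdy_nonneg δ (-n))
    · intro n
      unfold cdy
      have hmax : max ((((-(n:ℤ)) : ℤ)):ℝ) 0 = 0 :=
        max_eq_right (by push_cast; exact neg_nonpos.mpr (Nat.cast_nonneg n))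
      have h1 : (1 + (2:ℝ) ^ ((((-(n:ℤ)) : ℤ)):ℝ)) ^ (-(1/2:ℝ) - δ) ≤ 1 :=
        Real.rpow_le_one_of_one_le_of_nonpos
          (by linarith [Real.rpow_pos_of_pos (show (0:ℝ)<2 by norm_num) ((((-(n:ℤ)) : ℤ)):ℝ)])
          (by linarith)
      have h2 : (2:ℝ) ^ (((((-(n:ℤ)) : ℤ)):ℝ)/2) = ((2:ℝ) ^ (-(1/2:ℝ))) ^ n := by
        rw [← Real.rpow_natCast ((2:ℝ) ^ (-(1/2:ℝ))) n, ← Real.rpow_mul (by norm_num)]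
        push_cast
        ring_nf
      rw [hmax, Real.sqrt_zero]
      calc (2:ℝ) ^ (((((-(n:ℤ)) : ℤ)):ℝ)/2) * (1 + (2:ℝ) ^ ((((-(n:ℤ)) : ℤ)):ℝ)) ^ (-(1/2:ℝ) - δ) * (1 + 0)
          ≤ (2:ℝ) ^ (((((-(n:ℤ)) : ℤ)):ℝ)/2) * 1 * 1 :=
            mul_le_mul (mul_le_mul_of_nonneg_left h1 (by positivity)) (by norm_num)
              (by norm_num) (by positivity)
        _ = ((2:ℝ) ^ (-(1/2:ℝ))) ^ n := by rw [h2]; ring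
    · exact summable_geometric_of_lt_one (by positivity)
        (Real.rpow_lt_one_of_one_lt_of_neg (by norm_num) (by norm_num))

lemma sqrt_log_bound (j : ℤ) (T : ℝ) (hT : 0 < T) :
    Real.sqrt (Real.log (2 + (2:ℝ) ^ (j:ℝ) * T)) ≤
      (1 + Real.sqrt (max (j:ℝ) 0)) * Real.sqrt (Real.log (2 + T)) := by
  have h2j : (0:ℝ) < (2:ℝ) ^ (j:ℝ) := Real.rpow_pos_of_pos (by norm_num) _
  have hL : Real.log 2 ≤ Real.log (2 + T) := Real.log_le_log (by norm_num) (by linarith)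
  have hlog2 : (0:ℝ) < Real.log 2 := Real.log_pos (by norm_num)
  have hL0 : 0 ≤ Real.log (2 + T) := le_trans hlog2.le hL
  rcases le_or_gt (j:ℝ) 0 with hj | hj
  · have h1 : (2:ℝ) ^ (j:ℝ) ≤ 1 := Real.rpow_le_one_of_one_le_of_nonpos (by norm_num) hj
    have harg : 2 + (2:ℝ) ^ (j:ℝ) * T ≤ 2 + T := by nlinarith
    have hmono := Real.sqrt_le_sqrt (Real.log_le_log (by nlinarith) harg)
    calc Real.sqrt (Real.log (2 + (2:ℝ) ^ (j:ℝ) * T)) ≤ Real.sqrt (Real.log (2 + T)) := hmono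
      _ ≤ (1 + Real.sqrt (max (j:ℝ) 0)) * Real.sqrt (Real.log (2 + T)) := by
          nlinarith [Real.sqrt_nonneg (max (j:ℝ) 0), Real.sqrt_nonneg (Real.log (2+T))]
  · have hmax : max (j:ℝ) 0 = (j:ℝ) := max_eq_left hj.le
    have h1 : (1:ℝ) ≤ (2:ℝ) ^ (j:ℝ) := Real.one_le_rpow (by norm_num) hj.le
    have harg : 2 + (2:ℝ) ^ (j:ℝ) * T ≤ (2:ℝ) ^ (j:ℝ) * (2 + T) := by nlinarith
    have hlogeq : Real.log ((2:ℝ) ^ (j:ℝ) * (2 + T)) = (j:ℝ) * Real.log 2 + Real.log (2 + T) := by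
      rw [Real.log_mul (by positivity) (by linarith), Real.log_rpow (by norm_num)]
    have step1 : Real.sqrt (Real.log (2 + (2:ℝ) ^ (j:ℝ) * T)) ≤
        Real.sqrt ((j:ℝ) * Real.log 2 + Real.log (2 + T)) := by
      rw [← hlogeq]
      exact Real.sqrt_le_sqrt (Real.log_le_log (by nlinarith) harg)
    have step2 : Real.sqrt ((j:ℝ) * Real.log 2 + Real.log (2 + T)) ≤
        Real.sqrt ((j:ℝ) * Real.log 2) + Real.sqrt (Real.log (2 + T)) :=
      sqrt_add_le' (by positivity) hL0
    have step3 : Real.sqrt ((j:ℝ) * Real.log 2) ≤ Real.sqrt (j:ℝ) * Real.sqrt (Real.log (2+T)) := by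
      rw [Real.sqrt_mul hj.le]
      exact mul_le_mul_of_nonneg_left (Real.sqrt_le_sqrt hL) (Real.sqrt_nonneg _)
    calc Real.sqrt (Real.log (2 + (2:ℝ) ^ (j:ℝ) * T))
        ≤ Real.sqrt ((j:ℝ) * Real.log 2) + Real.sqrt (Real.log (2 + T)) := step1.trans step2
      _ ≤ Real.sqrt (j:ℝ) * Real.sqrt (Real.log (2+T)) + Real.sqrt (Real.log (2 + T)) := by
          linarith
      _ = (1 + Real.sqrt (max (j:ℝ) 0)) * Real.sqrt (Real.log (2 + T)) := by
          rw [hmax]; ring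

/-- For any `δ > 0` there is a constant `C_δ` such that for all `T > 0`,
`∑_{j ∈ ℤ} 2^{j/2} (1+2^j)^{-1/2-δ} (ln(2+2^j T))^{1/2} ≤ C_δ (ln(2+T))^{1/2}`. -/
theorem dyadic_log_sum_estimate (δ : ℝ) (hδ : 0 < δ) :
    ∃ C : ℝ, 0 < C ∧ ∀ T : ℝ, 0 < T →
      (∑' j : ℤ, (2 : ℝ) ^ ((j : ℝ) / 2) * (1 + (2 : ℝ) ^ (j : ℝ)) ^ (-(1/2 : ℝ) - δ) *
          Real.sqrt (Real.log (2 + (2 : ℝ) ^ (j : ℝ) * T)))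
        ≤ C * Real.sqrt (Real.log (2 + T)) := by
  have hsum := cdy_summable δ hδ
  have hSnn : 0 ≤ ∑' j : ℤ, cdy δ j := tsum_nonneg (cdy_nonneg δ)
  refine ⟨(∑' j : ℤ, cdy δ j) + 1, by positivity, fun T hT => ?_⟩
  set s := Real.sqrt (Real.log (2 + T)) with hs
  have hs0 : 0 ≤ s := Real.sqrt_nonneg _
  have hle : ∀ j : ℤ, (2 : ℝ) ^ ((j : ℝ) / 2) * (1 + (2 : ℝ) ^ (j : ℝ)) ^ (-(1/2 : ℝ) - δ) *
      Real.sqrt (Real.log (2 + (2 : ℝ) ^ (j : ℝ) * T)) ≤ cdy δ j * s := by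
    intro j
    have := sqrt_log_bound j T hT
    calc (2 : ℝ) ^ ((j : ℝ) / 2) * (1 + (2 : ℝ) ^ (j : ℝ)) ^ (-(1/2 : ℝ) - δ) *
        Real.sqrt (Real.log (2 + (2 : ℝ) ^ (j : ℝ) * T))
        ≤ (2 : ℝ) ^ ((j : ℝ) / 2) * (1 + (2 : ℝ) ^ (j : ℝ)) ^ (-(1/2 : ℝ) - δ) *
          ((1 + Real.sqrt (max (j:ℝ) 0)) * s) := by
          exact mul_le_mul_of_nonneg_left this (by positivity)
      _ = cdy δ j * s := by unfold cdy; ring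
  have hsum2 : Summable (fun j : ℤ => cdy δ j * s) := hsum.mul_right s
  have hsum1 : Summable (fun j : ℤ => (2 : ℝ) ^ ((j : ℝ) / 2) *
      (1 + (2 : ℝ) ^ (j : ℝ)) ^ (-(1/2 : ℝ) - δ) *
      Real.sqrt (Real.log (2 + (2 : ℝ) ^ (j : ℝ) * T))) :=
    Summable.of_nonneg_of_le (fun j => by positivity) hle hsum2
  calc (∑' j : ℤ, (2 : ℝ) ^ ((j : ℝ) / 2) * (1 + (2 : ℝ) ^ (j : ℝ)) ^ (-(1/2 : ℝ) - δ) *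
        Real.sqrt (Real.log (2 + (2 : ℝ) ^ (j : ℝ) * T)))
      ≤ ∑' j : ℤ, cdy δ j * s := Summable.tsum_le_tsum hle hsum1 hsum2
    _ = (∑' j : ℤ, cdy δ j) * s := tsum_mul_right
    _ ≤ ((∑' j : ℤ, cdy δ j) + 1) * s := by nlinarith
end

section
/- Let α ∈ 𝒮(ℝ). There exists a constant C such that for all r > 1 and all m ∈ ℝ with |m| ≤ 2r, one has ∫₀^{2π} |α̂(m − r cos θ)| dθ ≤ C ( r^{−1} + r^{−1/2} ⟨ r − |m| ⟩^{−1/2} ). -/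
open Real SchwartzMap FourierTransform


lemma helper_int (c t₀ : ℝ) (hc : 0 < c) :
    (∫ θ in (0:ℝ)..(π/2), Real.cos θ / (1 + (c * (Real.sin θ - t₀))^2)) ≤ π / c := by
  have key : ∀ θ ∈ Set.uIcc (0:ℝ) (π/2),
      HasDerivAt (fun θ => Real.arctan (c * (Real.sin θ - t₀)) / c)
        (Real.cos θ / (1 + (c * (Real.sin θ - t₀))^2)) θ := by
    intro θ _
    have h1 : HasDerivAt (fun θ => c * (Real.sin θ - t₀)) (c * Real.cos θ) θ :=
      ((Real.hasDerivAt_sin θ).sub_const t₀).const_mul c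
    have h2 := (Real.hasDerivAt_arctan (c * (Real.sin θ - t₀))).comp θ h1
    have h3 := h2.div_const c
    exact h3.congr_deriv (by field_simp)
  have hcont : Continuous fun θ => Real.cos θ / (1 + (c * (Real.sin θ - t₀))^2) := by
    apply Real.continuous_cos.div (by continuity)
    intro x
    positivity
  rw [intervalIntegral.integral_eq_sub_of_hasDerivAt key (hcont.intervalIntegrable _ _)]
  have a1 : Real.arctan (c * (Real.sin (π/2) - t₀)) < π/2 := Real.arctan_lt_pi_div_two _
  have a2 : -(π/2) < Real.arctan (c * (Real.sin 0 - t₀)) := Real.neg_pi_div_two_lt_arctan _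
  rw [div_sub_div_same, div_le_div_iff₀ hc hc]
  nlinarith

lemma rpow_quarter_le {x y : ℝ} (hx : 0 ≤ x) (hy : 0 ≤ y) (h : x ≤ y^4) :
    x ^ ((1/4):ℝ) ≤ y := by
  calc x ^ ((1/4):ℝ) ≤ (y^4) ^ ((1/4):ℝ) := Real.rpow_le_rpow hx h (by norm_num)
  _ = y := by
      rw [← Real.rpow_natCast y 4, ← Real.rpow_mul hy]
      norm_num

lemma cmp_lemma {r w a G : ℝ} (hr : 0 < r) (hw : 0 < w) (hG : 0 < G)
    (h : G^4 * (1 + a^2) ≤ 20^4 * w^2) :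
    G / Real.sqrt (r * w) ≤ 20 * (r ^ (-(1/2):ℝ) * (1 + a^2) ^ (-(1/4):ℝ)) := by
  have ha : (0:ℝ) < 1 + a^2 := by positivity
  have hP : (0:ℝ) < (1 + a^2) ^ ((1/4):ℝ) := Real.rpow_pos_of_pos ha _
  have hsr : (0:ℝ) < Real.sqrt r := Real.sqrt_pos.mpr hr
  have hsw : (0:ℝ) < Real.sqrt w := Real.sqrt_pos.mpr hw
  have e1 : r ^ (-(1/2):ℝ) = (Real.sqrt r)⁻¹ := by
    rw [Real.rpow_neg hr.le, Real.sqrt_eq_rpow]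
  have e2 : (1 + a^2) ^ (-(1/4):ℝ) = ((1 + a^2) ^ ((1/4):ℝ))⁻¹ := by
    rw [← Real.rpow_neg ha.le]
  have e3 : Real.sqrt (r * w) = Real.sqrt r * Real.sqrt w := Real.sqrt_mul hr.le w
  have key : (1 + a^2) ^ ((1/4):ℝ) ≤ (20 / G) * Real.sqrt w := by
    apply rpow_quarter_le ha.le (by positivity)
    have hsw4 : (Real.sqrt w)^4 = w^2 := by
      rw [show (4:ℕ) = 2*2 by norm_num, pow_mul, Real.sq_sqrt hw.le]
    rw [mul_pow, hsw4]
    rw [div_pow]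
    rw [← sub_nonneg]
    have hG4 : (0:ℝ) < G^4 := by positivity
    have h2 : (0:ℝ) ≤ (20^4 * w^2 - G^4 * (1 + a^2)) / G^4 :=
      div_nonneg (by linarith) hG4.le
    have h3 : (20^4 * w^2 - G^4 * (1 + a^2)) / G^4
        = 20 ^ 4 / G ^ 4 * w ^ 2 - (1 + a ^ 2) := by field_simp; try ring
    linarith [h3 ▸ h2]
  rw [e1, e2, e3, div_le_iff₀ (by positivity)]
  have : G ≤ 20 * Real.sqrt w / ((1 + a^2) ^ ((1/4):ℝ)) := by
    rw [le_div_iff₀ hP]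
    calc G * (1 + a^2) ^ ((1/4):ℝ) ≤ G * ((20 / G) * Real.sqrt w) := by
          exact mul_le_mul_of_nonneg_left key hG.le
    _ = 20 * Real.sqrt w := by field_simp
  calc G ≤ 20 * Real.sqrt w / ((1 + a^2) ^ ((1/4):ℝ)) := this
  _ = 20 * ((Real.sqrt r)⁻¹ * ((1 + a^2) ^ ((1/4):ℝ))⁻¹) * (Real.sqrt r * Real.sqrt w) := by
      field_simp

lemma arith_tri {s q : ℝ} (hs0 : 0 ≤ s) (hs1 : s ≤ 1) (hq0 : 0 ≤ q)
    (hsc : s^2 + q^2 = 1) : 1 - s ≤ q := by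
  nlinarith [mul_nonneg hs0 (sub_nonneg.mpr hs1), sq_nonneg (q - (1 - s)),
    sq_nonneg (q + (1 - s))]

lemma arith_neg {r μ s q : ℝ} (hr : 1 < r) (hμ : μ < 0) (hs0 : 0 ≤ s) (hs1 : s ≤ 1)
    (hq0 : 0 ≤ q) (hsc : s^2 + q^2 = 1) :
    1 + (r * (s - 1))^2 ≤ 1 * (1 + (μ - r * q)^2) := by
  have htri : 1 - s ≤ q := arith_tri hs0 hs1 hq0 hsc
  have h1 : r * (1 - s) ≤ r * q - μ := by nlinarith
  have hnn : 0 ≤ r * (1 - s) := by nlinarith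
  nlinarith [mul_self_le_mul_self hnn h1]

lemma arith_A {r a μ s q : ℝ} (hr : 1 < r) (ha1 : -1 ≤ a) (ha2 : a ≤ 1) (hμ : μ = r - a)
    (hq0 : 0 ≤ q) (hq1 : q ≤ 1) (hsc : s^2 + q^2 = 1) :
    1 + r * (1/4) * s^2 ≤ 2 * (1 + (μ - r * q)^2) := by
  have he : μ - r * q = r * (1 - q) - a := by rw [hμ]; ring
  rw [he]
  have hr0 : (0:ℝ) < r := by linarith
  have h1 : r * s^2 / 4 ≤ r * (1 - q) / 2 := by
    nlinarith [mul_nonneg (mul_nonneg hr0.le (sub_nonneg.mpr hq1)) (sub_nonneg.mpr hq1)]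
  have h2 : r * (1 - q) / 2 ≤ 1 + 2 * (r * (1 - q) - a)^2 := by
    nlinarith [sq_nonneg (r * (1 - q) - a - 1/8)]
  linarith

lemma arith_C {r a μ s q : ℝ} (hr : 1 < r) (ha : a < -1) (hμ : μ = r - a)
    (hq0 : 0 ≤ q) (hq1 : q ≤ 1) (hsc : s^2 + q^2 = 1) :
    1 + r * (-a/2) * s^2 ≤ 1 * (1 + (μ - r * q)^2) := by
  have hr0 : (0:ℝ) < r := by linarith
  have hx1 : -a ≤ μ - r * q := by
    nlinarith [mul_nonneg hr0.le (sub_nonneg.mpr hq1)]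
  have hx2 : r * s^2 / 2 ≤ μ - r * q := by
    nlinarith [mul_nonneg hr0.le (sq_nonneg (1 - q))]
  have hs2 : 0 ≤ r * s^2 / 2 := by positivity
  have hb : 0 ≤ μ - r * q := by linarith
  nlinarith [mul_le_mul hx1 hx2 hs2 hb]

lemma arith_B {r a μ s q t₀ : ℝ} (hr : 1 < r) (ha : 1 < a) (hμ : μ = r - a)
    (hμ0 : 0 ≤ μ) (ht0 : 0 ≤ t₀) (ht2 : t₀^2 = 1 - (μ/r)^2)
    (hs0 : 0 ≤ s) (hq0 : 0 ≤ q) (hq1 : q ≤ 1) (hsc : s^2 + q^2 = 1) :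
    1 + r * (a/4) * (s - t₀)^2 ≤ 1 * (1 + (μ - r * q)^2) := by
  have hr0 : (0:ℝ) < r := by linarith
  have hμr : μ ≤ r := by linarith
  have hvr0 : 0 ≤ μ / r := div_nonneg hμ0 hr0.le
  have hvr1 : μ / r ≤ 1 := (div_le_one hr0).mpr hμr
  have hst : (0:ℝ) ≤ s^2 + 2 * (s * t₀) := by positivity
  have h1 : (s - t₀)^2 * t₀^2 ≤ ((s - t₀)*(s + t₀))^2 := by
    linarith [mul_nonneg (sq_nonneg (s - t₀)) hst]
  have h2 : (s - t₀)*(s + t₀) = (μ/r)^2 - q^2 := by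
    linear_combination hsc - ht2
  have h2sq : ((s - t₀)*(s + t₀))^2 = ((μ/r)^2 - q^2)^2 := by rw [h2]
  have hvq : ((μ/r) + q)^2 ≤ 4 := by nlinarith
  have h3 : ((μ/r)^2 - q^2)^2 ≤ 4 * ((μ/r) - q)^2 := by
    linarith [mul_le_mul_of_nonneg_left hvq (sq_nonneg ((μ/r) - q))]
  have hr2t : r^2 * t₀^2 = r^2 - μ^2 := by rw [ht2]; field_simp
  have h4 : r * a ≤ r^2 * t₀^2 := by rw [hr2t]; nlinarith
  have s1 : r * a * (s - t₀)^2 ≤ r^2 * t₀^2 * (s - t₀)^2 :=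
    mul_le_mul_of_nonneg_right h4 (sq_nonneg _)
  have s2 : r^2 * t₀^2 * (s - t₀)^2 ≤ r^2 * ((μ/r)^2 - q^2)^2 := by
    rw [← h2sq]; linarith [mul_le_mul_of_nonneg_left h1 (sq_nonneg r)]
  have s3 : r^2 * ((μ/r)^2 - q^2)^2 ≤ 4 * (r^2 * ((μ/r) - q)^2) := by
    linarith [mul_le_mul_of_nonneg_left h3 (sq_nonneg r)]
  have s4 : r^2 * ((μ/r) - q)^2 = (μ - r * q)^2 := by
    field_simp
  linarith [s1, s2, s3, s4]

lemma mono_step {μ r : ℝ} (c t₀ K : ℝ) (hc : 0 < c) (hK : 0 ≤ K)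
    (hpt : ∀ θ ∈ Set.Icc (0:ℝ) (π/2),
      1 + (c * (Real.sin θ - t₀))^2 ≤ K * (1 + (μ - r * Real.cos θ)^2)) :
    (∫ θ in (0:ℝ)..(π/2), Real.cos θ * (1 + (μ - r * Real.cos θ)^2)⁻¹)
      ≤ K * (π / c) := by
  have hcont1 : Continuous fun θ => Real.cos θ * (1 + (μ - r * Real.cos θ)^2)⁻¹ := by
    apply Real.continuous_cos.mul
    apply Continuous.inv₀ (by continuity)
    intro x; positivity
  have hcont2 : Continuous fun θ => K * (Real.cos θ / (1 + (c * (Real.sin θ - t₀))^2)) := by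
    apply continuous_const.mul
    apply Real.continuous_cos.div (by continuity)
    intro x; positivity
  have step : (∫ θ in (0:ℝ)..(π/2), Real.cos θ * (1 + (μ - r * Real.cos θ)^2)⁻¹)
      ≤ ∫ θ in (0:ℝ)..(π/2), K * (Real.cos θ / (1 + (c * (Real.sin θ - t₀))^2)) := by
    apply intervalIntegral.integral_mono_on (by positivity)
      (hcont1.intervalIntegrable _ _) (hcont2.intervalIntegrable _ _)
    intro θ hθ
    have hcos : 0 ≤ Real.cos θ :=
      Real.cos_nonneg_of_mem_Icc ⟨by linarith [hθ.1, Real.pi_pos], hθ.2⟩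
    have h1 : (0:ℝ) < 1 + (μ - r * Real.cos θ)^2 := by positivity
    have h2 : (0:ℝ) < 1 + (c * (Real.sin θ - t₀))^2 := by positivity
    have key : (1 + (μ - r * Real.cos θ)^2)⁻¹ ≤ K / (1 + (c * (Real.sin θ - t₀))^2) := by
      rw [inv_eq_one_div, div_le_div_iff₀ h1 h2]
      nlinarith [hpt θ hθ]
    calc Real.cos θ * (1 + (μ - r * Real.cos θ)^2)⁻¹
        ≤ Real.cos θ * (K / (1 + (c * (Real.sin θ - t₀))^2)) :=
          mul_le_mul_of_nonneg_left key hcos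
      _ = K * (Real.cos θ / (1 + (c * (Real.sin θ - t₀))^2)) := by ring
  calc (∫ θ in (0:ℝ)..(π/2), Real.cos θ * (1 + (μ - r * Real.cos θ)^2)⁻¹)
      ≤ ∫ θ in (0:ℝ)..(π/2), K * (Real.cos θ / (1 + (c * (Real.sin θ - t₀))^2)) := step
    _ = K * ∫ θ in (0:ℝ)..(π/2), Real.cos θ / (1 + (c * (Real.sin θ - t₀))^2) := by
        rw [intervalIntegral.integral_const_mul]
    _ ≤ K * (π / c) := mul_le_mul_of_nonneg_left (helper_int c t₀ hc) hK

set_option maxHeartbeats 1000000 in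
lemma quarter_L (μ r : ℝ) (hr : 1 < r) :
    (∫ θ in (0:ℝ)..(π/2), Real.cos θ * (1 + (μ - r * Real.cos θ)^2)⁻¹)
      ≤ 20 * (r⁻¹ + r ^ (-(1/2):ℝ) * (1 + (r - |μ|)^2) ^ (-(1/4):ℝ)) := by
  have hr0 : (0:ℝ) < r := by linarith
  have hRnn : 0 ≤ r ^ (-(1/2):ℝ) * (1 + (r - |μ|)^2) ^ (-(1/4):ℝ) := by positivity
  have hrinn : 0 ≤ r⁻¹ := by positivity
  have hpi4 := Real.pi_le_four
  have fact : ∀ θ ∈ Set.Icc (0:ℝ) (π/2), 0 ≤ Real.sin θ ∧ Real.sin θ ≤ 1 ∧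
      0 ≤ Real.cos θ ∧ Real.cos θ ≤ 1 ∧ Real.sin θ ^2 + Real.cos θ ^2 = 1 := by
    intro θ hθ
    exact ⟨Real.sin_nonneg_of_nonneg_of_le_pi hθ.1 (by linarith [hθ.2, Real.pi_pos]),
      Real.sin_le_one θ,
      Real.cos_nonneg_of_mem_Icc ⟨by linarith [hθ.1, Real.pi_pos], hθ.2⟩,
      Real.cos_le_one θ, Real.sin_sq_add_cos_sq θ⟩
  rcases lt_or_ge μ 0 with hμ | hμ
  · -- μ < 0
    have key := mono_step (μ := μ) (r := r) r 1 1 hr0 zero_le_one (fun θ hθ => by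
      obtain ⟨h1, h2, h3, h4, h5⟩ := fact θ hθ
      exact arith_neg hr hμ h1 h2 h3 h5)
    have step2 : 1 * (π / r) ≤ 20 * r⁻¹ := by
      rw [one_mul, div_eq_mul_inv]
      exact mul_le_mul_of_nonneg_right (by linarith) hrinn
    calc (∫ θ in (0:ℝ)..(π/2), Real.cos θ * (1 + (μ - r * Real.cos θ)^2)⁻¹)
        ≤ 1 * (π / r) := key
      _ ≤ 20 * r⁻¹ := step2
      _ ≤ 20 * (r⁻¹ + r ^ (-(1/2):ℝ) * (1 + (r - |μ|)^2) ^ (-(1/4):ℝ)) := by linarith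
  · -- μ ≥ 0
    have hμabs : |μ| = μ := abs_of_nonneg hμ
    rw [hμabs]
    set a := r - μ with ha
    have hμa : μ = r - a := by rw [ha]; ring
    have hRnn' : 0 ≤ r ^ (-(1/2):ℝ) * (1 + a^2) ^ (-(1/4):ℝ) := by positivity
    rcases le_or_gt (|a|) 1 with haA | haB
    · -- Case A
      have habs := abs_le.mp haA
      have hw : (0:ℝ) < r * (1/4) := by linarith
      have hc : (0:ℝ) < Real.sqrt (r * (1/4)) := Real.sqrt_pos.mpr hw
      have key := mono_step (μ := μ) (r := r) (Real.sqrt (r * (1/4))) 0 2 hc (by norm_num)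
        (fun θ hθ => by
          obtain ⟨h1, h2, h3, h4, h5⟩ := fact θ hθ
          have expand : (Real.sqrt (r * (1/4)) * (Real.sin θ - 0))^2
              = r * (1/4) * Real.sin θ ^ 2 := by
            rw [sub_zero, mul_pow, Real.sq_sqrt hw.le]
          rw [expand]
          exact arith_A hr habs.1 habs.2 hμa h3 h4 h5)
      have hcmp := cmp_lemma (a := a) hr0 (show (0:ℝ) < 1/4 by norm_num)
        (show (0:ℝ) < 8 by norm_num) (by clear key; nlinarith [habs.1, habs.2])
      calc (∫ θ in (0:ℝ)..(π/2), Real.cos θ * (1 + (μ - r * Real.cos θ)^2)⁻¹)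
          ≤ 2 * (π / Real.sqrt (r * (1/4))) := key
        _ = 2 * π / Real.sqrt (r * (1/4)) := by ring
        _ ≤ 8 / Real.sqrt (r * (1/4)) := by gcongr; linarith
        _ ≤ 20 * (r ^ (-(1/2):ℝ) * (1 + a^2) ^ (-(1/4):ℝ)) := hcmp
        _ ≤ 20 * (r⁻¹ + r ^ (-(1/2):ℝ) * (1 + a^2) ^ (-(1/4):ℝ)) := by linarith
    · rcases lt_or_ge a 0 with haC | haB'
      · -- Case C : a < -1
        have haC1 : a < -1 := by
          rcases abs_cases a with h | h
          · linarith [h.1, h.2]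
          · linarith [h.1, h.2]
        have hw : (0:ℝ) < r * (-a/2) := by nlinarith
        have hc : (0:ℝ) < Real.sqrt (r * (-a/2)) := Real.sqrt_pos.mpr hw
        have key := mono_step (μ := μ) (r := r) (Real.sqrt (r * (-a/2))) 0 1 hc zero_le_one
          (fun θ hθ => by
            obtain ⟨h1, h2, h3, h4, h5⟩ := fact θ hθ
            have expand : (Real.sqrt (r * (-a/2)) * (Real.sin θ - 0))^2
                = r * (-a/2) * Real.sin θ ^ 2 := by
              rw [sub_zero, mul_pow, Real.sq_sqrt hw.le]
            rw [expand]
            exact arith_C hr haC1 hμa h3 h4 h5)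
        have hcmp := cmp_lemma (a := a) hr0 (show (0:ℝ) < -a/2 by linarith)
          (show (0:ℝ) < 4 by norm_num) (by clear key; nlinarith [sq_nonneg (a+1), sq_nonneg (a-1)])
        calc (∫ θ in (0:ℝ)..(π/2), Real.cos θ * (1 + (μ - r * Real.cos θ)^2)⁻¹)
            ≤ 1 * (π / Real.sqrt (r * (-a/2))) := key
          _ = π / Real.sqrt (r * (-a/2)) := by ring
          _ ≤ 4 / Real.sqrt (r * (-a/2)) := by gcongr
          _ ≤ 20 * (r ^ (-(1/2):ℝ) * (1 + a^2) ^ (-(1/4):ℝ)) := hcmp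
          _ ≤ 20 * (r⁻¹ + r ^ (-(1/2):ℝ) * (1 + a^2) ^ (-(1/4):ℝ)) := by linarith
      · -- Case B : a > 1
        have haB1 : 1 < a := by
          rcases abs_cases a with h | h
          · linarith [h.1]
          · linarith [h.1, h.2]
        have hμr : μ ≤ r := by linarith [hμa]
        have ht2nn : (0:ℝ) ≤ 1 - (μ/r)^2 := by
          have h1 : 0 ≤ μ / r := div_nonneg hμ hr0.le
          have h2 : μ / r ≤ 1 := (div_le_one hr0).mpr hμr
          nlinarith
        have ht2 : (Real.sqrt (1 - (μ/r)^2))^2 = 1 - (μ/r)^2 := Real.sq_sqrt ht2nn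
        have ht0 : 0 ≤ Real.sqrt (1 - (μ/r)^2) := Real.sqrt_nonneg _
        have hw : (0:ℝ) < r * (a/4) := by nlinarith
        have hc : (0:ℝ) < Real.sqrt (r * (a/4)) := Real.sqrt_pos.mpr hw
        have key := mono_step (μ := μ) (r := r) (Real.sqrt (r * (a/4)))
          (Real.sqrt (1 - (μ/r)^2)) 1 hc zero_le_one
          (fun θ hθ => by
            obtain ⟨h1, h2, h3, h4, h5⟩ := fact θ hθ
            have expand : (Real.sqrt (r * (a/4)) * (Real.sin θ - Real.sqrt (1 - (μ/r)^2)))^2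
                = r * (a/4) * (Real.sin θ - Real.sqrt (1 - (μ/r)^2))^2 := by
              rw [mul_pow, Real.sq_sqrt hw.le]
            rw [expand]
            exact arith_B hr haB1 hμa hμ ht0 ht2 h1 h3 h4 h5)
        have hcmp := cmp_lemma (a := a) hr0 (show (0:ℝ) < a/4 by linarith)
          (show (0:ℝ) < 4 by norm_num) (by clear key; nlinarith [sq_nonneg (a-1)])
        calc (∫ θ in (0:ℝ)..(π/2), Real.cos θ * (1 + (μ - r * Real.cos θ)^2)⁻¹)
            ≤ 1 * (π / Real.sqrt (r * (a/4))) := key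
          _ = π / Real.sqrt (r * (a/4)) := by ring
          _ ≤ 4 / Real.sqrt (r * (a/4)) := by gcongr
          _ ≤ 20 * (r ^ (-(1/2):ℝ) * (1 + a^2) ^ (-(1/4):ℝ)) := hcmp
          _ ≤ 20 * (r⁻¹ + r ^ (-(1/2):ℝ) * (1 + a^2) ^ (-(1/4):ℝ)) := by linarith

lemma sin_sq_part (m r : ℝ) (hr : 0 < r) :
    (∫ θ in (0:ℝ)..(2*π), Real.sin θ^2 * (1 + (m - r * Real.cos θ)^2)⁻¹) ≤ π^2 / r := by
  set v : ℝ → ℝ := fun θ => Real.arctan (m - r * Real.cos θ) with hv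
  set v' : ℝ → ℝ := fun θ => (1 + (m - r * Real.cos θ)^2)⁻¹ * (r * Real.sin θ) with hv'
  have hderiv : ∀ θ ∈ Set.uIcc (0:ℝ) (2*π), HasDerivAt v (v' θ) θ := by
    intro θ _
    have h1 : HasDerivAt (fun θ => m - r * Real.cos θ) (r * Real.sin θ) θ := by
      simpa using ((Real.hasDerivAt_cos θ).const_mul r).const_sub m
    have h2 := (Real.hasDerivAt_arctan (m - r * Real.cos θ)).comp θ h1
    simpa [hv, hv', one_div, Function.comp_def] using h2
  have hsin : ∀ θ ∈ Set.uIcc (0:ℝ) (2*π), HasDerivAt Real.sin (Real.cos θ) θ :=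
    fun θ _ => Real.hasDerivAt_sin θ
  have hcont_v' : Continuous v' := by
    apply Continuous.mul
    · apply Continuous.inv₀ (by continuity)
      intro x; positivity
    · continuity
  have hibp := intervalIntegral.integral_mul_deriv_eq_deriv_mul hsin hderiv
    (Real.continuous_cos.intervalIntegrable _ _) (hcont_v'.intervalIntegrable _ _)
  -- ∫ sin * v' = sin(2π) v(2π) - sin 0 v 0 - ∫ cos * v
  have hzero : Real.sin (2*π) * v (2*π) - Real.sin 0 * v 0 = 0 := by
    simp [Real.sin_two_pi]
  rw [hzero, zero_sub] at hibp
  have he : (∫ θ in (0:ℝ)..(2*π), Real.sin θ * v' θ)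
      = r * ∫ θ in (0:ℝ)..(2*π), Real.sin θ^2 * (1 + (m - r * Real.cos θ)^2)⁻¹ := by
    rw [← intervalIntegral.integral_const_mul]
    apply intervalIntegral.integral_congr
    intro θ _
    simp only [hv']
    ring
  have hbound : ‖∫ θ in (0:ℝ)..(2*π), Real.cos θ * v θ‖ ≤ (π/2) * |2*π - 0| := by
    apply intervalIntegral.norm_integral_le_of_norm_le_const
    intro x _
    have h1 : |Real.arctan (m - r * Real.cos x)| ≤ π/2 := by
      have := Real.arctan_mem_Ioo (m - r * Real.cos x)
      rw [abs_le]
      constructor <;> linarith [this.1, this.2]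
    have h2 : |Real.cos x| ≤ 1 := Real.abs_cos_le_one x
    calc ‖Real.cos x * v x‖ = |Real.cos x| * |Real.arctan (m - r * Real.cos x)| := by
          rw [Real.norm_eq_abs, abs_mul]
      _ ≤ 1 * (π/2) := by
          apply mul_le_mul h2 h1 (abs_nonneg _) zero_le_one
      _ = π/2 := one_mul _
  have hpi : (0:ℝ) < π := Real.pi_pos
  have habs : |2*π - 0| = 2*π := by
    rw [sub_zero, abs_of_nonneg (by positivity)]
  rw [habs] at hbound
  rw [Real.norm_eq_abs] at hbound
  have hkey : r * ∫ θ in (0:ℝ)..(2*π), Real.sin θ^2 * (1 + (m - r * Real.cos θ)^2)⁻¹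
      ≤ π^2 := by
    rw [← he, hibp]
    calc -∫ θ in (0:ℝ)..(2*π), Real.cos θ * v θ
        ≤ |∫ θ in (0:ℝ)..(2*π), Real.cos θ * v θ| := neg_le_abs _
      _ ≤ π/2 * (2*π) := hbound
      _ = π^2 := by ring
  rw [le_div_iff₀ hr]
  linarith [hkey]

set_option maxHeartbeats 1000000 in
lemma split_lemma (m r : ℝ) (hr : 1 < r) :
    (∫ θ in (0:ℝ)..(2*π), (1 + (m - r * Real.cos θ)^2)⁻¹)
      ≤ (∫ θ in (0:ℝ)..(2*π), Real.sin θ^2 * (1 + (m - r * Real.cos θ)^2)⁻¹)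
        + 2 * ((∫ θ in (0:ℝ)..(π/2), Real.cos θ * (1 + (m - r * Real.cos θ)^2)⁻¹)
          + (∫ θ in (0:ℝ)..(π/2), Real.cos θ * (1 + (-m - r * Real.cos θ)^2)⁻¹)) := by
  have hpi := Real.pi_pos
  have hcont : ∀ μ : ℝ, Continuous fun θ : ℝ => (1 + (μ - r * Real.cos θ)^2)⁻¹ := by
    intro μ
    apply Continuous.inv₀ (by continuity)
    intro x; positivity
  have hint : ∀ (g : ℝ → ℝ), Continuous g → ∀ (a b : ℝ) (μ : ℝ),
      IntervalIntegrable (fun θ => g θ * (1 + (μ - r * Real.cos θ)^2)⁻¹)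
        MeasureTheory.volume a b :=
    fun g hg a b μ => ((hg.mul (hcont μ)).intervalIntegrable a b)
  -- write f = sin^2 f + cos^2 f
  have hsplit : (∫ θ in (0:ℝ)..(2*π), (1 + (m - r * Real.cos θ)^2)⁻¹)
      = (∫ θ in (0:ℝ)..(2*π), Real.sin θ^2 * (1 + (m - r * Real.cos θ)^2)⁻¹)
        + ∫ θ in (0:ℝ)..(2*π), Real.cos θ^2 * (1 + (m - r * Real.cos θ)^2)⁻¹ := by
    rw [← intervalIntegral.integral_add (hint _ (by continuity) _ _ _)
      (hint _ (by continuity) _ _ _)]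
    apply intervalIntegral.integral_congr
    intro θ _
    have h := Real.sin_sq_add_cos_sq θ
    simp only
    linear_combination ((1 + (m - r * Real.cos θ)^2)⁻¹) * h.symm
  rw [hsplit]
  have step1 : (∫ θ in π..(2*π), Real.cos θ^2 * (1 + (m - r * Real.cos θ)^2)⁻¹)
      = ∫ θ in (0:ℝ)..π, Real.cos θ^2 * (1 + (m - r * Real.cos θ)^2)⁻¹ := by
    have e := intervalIntegral.integral_comp_sub_left (a := 0) (b := π)
      (fun θ => Real.cos θ^2 * (1 + (m - r * Real.cos θ)^2)⁻¹) (2*π)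
    have e2 : 2*π - π = π := by ring
    have e3 : 2*π - 0 = 2*π := by ring
    rw [e2, e3] at e
    rw [← e]
    apply intervalIntegral.integral_congr
    intro θ _
    have hc : Real.cos (2*π - θ) = Real.cos θ := by
      rw [Real.cos_sub]; simp [Real.cos_two_pi, Real.sin_two_pi]
    simp only [hc]
  have step2 : (∫ θ in (π/2)..π, Real.cos θ^2 * (1 + (m - r * Real.cos θ)^2)⁻¹)
      = ∫ θ in (0:ℝ)..(π/2), Real.cos θ^2 * (1 + (-m - r * Real.cos θ)^2)⁻¹ := by
    have e := intervalIntegral.integral_comp_sub_left (a := 0) (b := π/2)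
      (fun θ => Real.cos θ^2 * (1 + (m - r * Real.cos θ)^2)⁻¹) π
    have e2 : π - π/2 = π/2 := by ring
    have e3 : π - 0 = π := by ring
    rw [e2, e3] at e
    rw [← e]
    apply intervalIntegral.integral_congr
    intro θ _
    have hc : Real.cos (π - θ) = -Real.cos θ := Real.cos_pi_sub θ
    simp only [hc]
    ring_nf
  have decomp0 : (∫ θ in (0:ℝ)..(2*π), Real.cos θ^2 * (1 + (m - r * Real.cos θ)^2)⁻¹)
      = (∫ θ in (0:ℝ)..π, Real.cos θ^2 * (1 + (m - r * Real.cos θ)^2)⁻¹)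
        + ∫ θ in π..(2*π), Real.cos θ^2 * (1 + (m - r * Real.cos θ)^2)⁻¹ := by
    rw [intervalIntegral.integral_add_adjacent_intervals (hint _ (by continuity) _ _ _)
      (hint _ (by continuity) _ _ _)]
  have decomp1 : (∫ θ in (0:ℝ)..π, Real.cos θ^2 * (1 + (m - r * Real.cos θ)^2)⁻¹)
      = (∫ θ in (0:ℝ)..(π/2), Real.cos θ^2 * (1 + (m - r * Real.cos θ)^2)⁻¹)
        + ∫ θ in (π/2)..π, Real.cos θ^2 * (1 + (m - r * Real.cos θ)^2)⁻¹ := by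
    rw [intervalIntegral.integral_add_adjacent_intervals (hint _ (by continuity) _ _ _)
      (hint _ (by continuity) _ _ _)]
  have hmono : ∀ μ : ℝ, (∫ θ in (0:ℝ)..(π/2), Real.cos θ^2 * (1 + (μ - r * Real.cos θ)^2)⁻¹)
      ≤ ∫ θ in (0:ℝ)..(π/2), Real.cos θ * (1 + (μ - r * Real.cos θ)^2)⁻¹ := by
    intro μ
    apply intervalIntegral.integral_mono_on (by positivity)
      (hint _ (by continuity) _ _ _) (hint _ (by continuity) _ _ _)
    intro θ hθ
    have hc0 : 0 ≤ Real.cos θ :=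
      Real.cos_nonneg_of_mem_Icc ⟨by linarith [hθ.1], hθ.2⟩
    have hc1 : Real.cos θ ≤ 1 := Real.cos_le_one θ
    have hf : 0 ≤ (1 + (μ - r * Real.cos θ)^2)⁻¹ := by positivity
    linarith [mul_nonneg (mul_nonneg hc0 (sub_nonneg.mpr hc1)) hf,
      show Real.cos θ * ((1 - Real.cos θ) * (1 + (μ - r * Real.cos θ)^2)⁻¹)
        = Real.cos θ * (1 + (μ - r * Real.cos θ)^2)⁻¹
          - Real.cos θ^2 * (1 + (μ - r * Real.cos θ)^2)⁻¹ from by ring]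
  have := hmono m
  have := hmono (-m)
  linarith [decomp0, decomp1, step1, step2]

set_option maxHeartbeats 1000000 in
/-- Lemma 2.1, second part: for a Schwartz function `α` there is `C` such that for all
`r > 1` and `|m| ≤ 2r`,
`∫₀^{2π} |α̂(m − r cos θ)| dθ ≤ C (r⁻¹ + r^{-1/2} ⟨r − |m|⟩^{-1/2})`. -/
theorem bessel_kernel_pointwise_main (α : SchwartzMap ℝ ℂ) :
    ∃ C : ℝ, 0 < C ∧ ∀ m r : ℝ, 1 < r → |m| ≤ 2 * r →
      (∫ θ in (0:ℝ)..(2 * π), ‖𝓕 (⇑α) (m - r * Real.cos θ)‖)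
        ≤ C * (r⁻¹ + r ^ (-(1/2) : ℝ) * (1 + (r - |m|) ^ 2) ^ (-(1/4) : ℝ)) := by
  set β := SchwartzMap.fourierTransformCLM ℝ α with hβdef
  have hβ : 𝓕 ⇑α = ⇑β := (congrArg (fun f : SchwartzMap ℝ ℂ => ⇑f) (SchwartzMap.fourierTransformCLM_apply ℝ (f := α))).symm
  obtain ⟨C2, hC2pos, hC2⟩ := β.decay 2 0
  obtain ⟨C0, hC0pos, hC0⟩ := β.decay 0 0
  set D := C0 + C2 with hD
  have hDpos : 0 < D := by positivity
  have hnorm : ∀ x : ℝ, ‖𝓕 (⇑α) x‖ ≤ D * (1 + x^2)⁻¹ := by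
    intro x
    have h2 := hC2 x
    have h0 := hC0 x
    rw [norm_iteratedFDeriv_zero] at h2 h0
    rw [pow_zero, one_mul] at h0
    rw [Real.norm_eq_abs, sq_abs] at h2
    have hx : (0:ℝ) < 1 + x^2 := by positivity
    have key : ‖β x‖ * (1 + x^2) ≤ D := by nlinarith
    rw [hβ]
    calc ‖β x‖ = ‖β x‖ * (1 + x^2) * (1 + x^2)⁻¹ := by field_simp
      _ ≤ D * (1 + x^2)⁻¹ := by
          apply mul_le_mul_of_nonneg_right key (by positivity)
  refine ⟨90 * D, by positivity, fun m r hr hm => ?_⟩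
  have hr0 : (0:ℝ) < r := by linarith
  have hcont : ∀ μ : ℝ, Continuous fun θ : ℝ => (1 + (μ - r * Real.cos θ)^2)⁻¹ := by
    intro μ
    apply Continuous.inv₀ (by continuity)
    intro x; positivity
  have hpi := Real.pi_pos
  -- step 1 : bound by D * ∫ (1 + (...)^2)⁻¹
  have step1 : (∫ θ in (0:ℝ)..(2 * π), ‖𝓕 (⇑α) (m - r * Real.cos θ)‖)
      ≤ D * ∫ θ in (0:ℝ)..(2*π), (1 + (m - r * Real.cos θ)^2)⁻¹ := by
    rw [← intervalIntegral.integral_const_mul]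
    apply intervalIntegral.integral_mono_on (by positivity)
    · have : Continuous fun θ : ℝ => ‖𝓕 (⇑α) (m - r * Real.cos θ)‖ := by
        rw [hβ]
        exact (β.continuous.comp (by continuity)).norm
      exact this.intervalIntegrable _ _
    · exact ((continuous_const.mul (hcont m)).intervalIntegrable _ _)
    · intro θ _
      exact hnorm _
  -- step 2 : the integral bound
  have hQ1 := quarter_L m r hr
  have hQ2 := quarter_L (-m) r hr
  rw [abs_neg] at hQ2
  have hsin := sin_sq_part m r hr0
  have hsplit := split_lemma m r hr
  have hR : 0 ≤ r ^ (-(1/2):ℝ) * (1 + (r - |m|)^2) ^ (-(1/4):ℝ) := by positivity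
  have hrinv : 0 ≤ r⁻¹ := by positivity
  have hpibound : π^2 / r ≤ 10 * r⁻¹ := by
    rw [div_eq_mul_inv]
    have h1 : π ≤ 3.15 := by linarith [Real.pi_lt_d2]
    have h2 : π^2 ≤ 10 := by nlinarith
    exact mul_le_mul_of_nonneg_right h2 hrinv
  have total : (∫ θ in (0:ℝ)..(2*π), (1 + (m - r * Real.cos θ)^2)⁻¹)
      ≤ 90 * (r⁻¹ + r ^ (-(1/2):ℝ) * (1 + (r - |m|)^2) ^ (-(1/4):ℝ)) := by
    linarith
  calc (∫ θ in (0:ℝ)..(2 * π), ‖𝓕 (⇑α) (m - r * Real.cos θ)‖)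
      ≤ D * ∫ θ in (0:ℝ)..(2*π), (1 + (m - r * Real.cos θ)^2)⁻¹ := step1
    _ ≤ D * (90 * (r⁻¹ + r ^ (-(1/2):ℝ) * (1 + (r - |m|)^2) ^ (-(1/4):ℝ))) :=
        mul_le_mul_of_nonneg_left total hDpos.le
    _ = 90 * D * (r⁻¹ + r ^ (-(1/2):ℝ) * (1 + (r - |m|)^2) ^ (-(1/4):ℝ)) := by ring
end

section
/- Let α ∈ 𝒮(ℝ). There exists a constant C such that for all r > 1 and all m ∈ ℝ, ∫₀^{π/4} |α̂(m − r cos θ)| dθ ≤ C r^{−1/2} ⟨ r − |m| ⟩^{−1/2}. -/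
open Real MeasureTheory Set

-- integrability of (1+x^2)^(-3/4) on ℝ
lemma aux_q_integrable : Integrable (fun x : ℝ => (1 + x^2) ^ (-(3/4) : ℝ)) := by
  have h := integrable_rpow_neg_one_add_norm_sq (E := ℝ) (μ := volume) (r := 3/2) (by norm_num)
  have : (fun x : ℝ => (1 + ‖x‖^2) ^ (-(3/2)/2 : ℝ)) = fun x : ℝ => (1 + x^2) ^ (-(3/4) : ℝ) := by
    funext x; rw [Real.norm_eq_abs, sq_abs]; norm_num
  rwa [this] at h

-- integrability of (√u)⁻¹ on (0,T)
lemma aux_sqrt_inv_integrableOn (T : ℝ) :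
    IntegrableOn (fun u : ℝ => (Real.sqrt u)⁻¹) (Ioo 0 T) := by
  rcases le_or_gt T 0 with hT | hT
  · rw [Set.Ioo_eq_empty (by intro h; exact absurd (h.trans_le hT) (lt_irrefl 0))]
    exact integrableOn_empty
  · have h := intervalIntegral.intervalIntegrable_rpow' (a := 0) (b := T) (r := -(1/2))
      (by norm_num)
    rw [intervalIntegrable_iff_integrableOn_Ioo_of_le hT.le] at h
    refine h.congr_fun (fun u hu => ?_) measurableSet_Ioo
    dsimp only
    rw [Real.rpow_neg hu.1.le, Real.sqrt_eq_rpow]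

-- ∫_{(0,1)} (√u)⁻¹ = 2
lemma aux_sqrt_inv_integral : ∫ u in Ioo (0:ℝ) 1, (Real.sqrt u)⁻¹ = 2 := by
  have h1 : ∫ u in Ioo (0:ℝ) 1, (Real.sqrt u)⁻¹ = ∫ u in Ioo (0:ℝ) 1, u ^ (-(1/2) : ℝ) := by
    refine setIntegral_congr_fun measurableSet_Ioo (fun u hu => ?_)
    rw [Real.rpow_neg hu.1.le, Real.sqrt_eq_rpow]
  rw [h1, ← integral_Ioc_eq_integral_Ioo, ← intervalIntegral.integral_of_le zero_le_one,
    integral_rpow (Or.inl (by norm_num))]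
  norm_num

lemma aux_ptwise (b : ℝ) {v : ℝ} (hv : 0 < v) :
    (1 + (v - b)^2)⁻¹ * (Real.sqrt v)⁻¹ ≤
      4 * (1 + b^2) ^ (-(1/4) : ℝ) *
        ((Set.Ioo (0:ℝ) 1).indicator (fun t => (Real.sqrt t)⁻¹) v
          + (1 + (v - b)^2) ^ (-(3/4) : ℝ)) := by
  have hsv : 0 < Real.sqrt v := Real.sqrt_pos.2 hv
  have hA : (1:ℝ) ≤ 1 + v^2 := by nlinarith [sq_nonneg v]
  have hB : (1:ℝ) ≤ 1 + (v-b)^2 := by nlinarith [sq_nonneg (v-b)]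
  have hG : (1:ℝ) ≤ 1 + b^2 := by nlinarith [sq_nonneg b]
  have hGpos : (0:ℝ) < (1 + b^2) ^ ((1/4):ℝ) := Real.rpow_pos_of_pos (by linarith) _
  have hmain : (1 + b^2) ^ ((1/4):ℝ) * ((1 + (v-b)^2)⁻¹ * (Real.sqrt v)⁻¹) ≤
      4 * ((Set.Ioo (0:ℝ) 1).indicator (fun t => (Real.sqrt t)⁻¹) v
          + (1 + (v - b)^2) ^ (-(3/4) : ℝ)) := by
    have peetre : (1 + b^2) ≤ 2 * (1 + v^2) * (1 + (v-b)^2) := by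
      nlinarith [sq_nonneg (v + (v - b)), sq_nonneg (v * (v-b)), sq_nonneg v, sq_nonneg (v-b)]
    have h1 : (1 + b^2) ^ ((1/4):ℝ) ≤
        2 ^ ((1/4):ℝ) * (1 + v^2) ^ ((1/4):ℝ) * (1 + (v-b)^2) ^ ((1/4):ℝ) := by
      have h := Real.rpow_le_rpow (show (0:ℝ) ≤ 1+b^2 by linarith) peetre (by norm_num : (0:ℝ) ≤ 1/4)
      rwa [Real.mul_rpow (by positivity) (by positivity),
        Real.mul_rpow (by norm_num) (by positivity)] at h
    have h2 : (1 + (v-b)^2) ^ ((1/4):ℝ) * (1 + (v-b)^2)⁻¹ = (1 + (v-b)^2) ^ (-(3/4):ℝ) := by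
      rw [← Real.rpow_neg_one (1 + (v-b)^2), ← Real.rpow_add (by linarith)]
      norm_num
    have htwo : (2:ℝ) ^ ((1/4):ℝ) ≤ 2 := by
      calc (2:ℝ) ^ ((1/4):ℝ) ≤ 2 ^ (1:ℝ) :=
        Real.rpow_le_rpow_of_exponent_le one_le_two (by norm_num)
      _ = 2 := Real.rpow_one 2
    calc (1 + b^2) ^ ((1/4):ℝ) * ((1 + (v-b)^2)⁻¹ * (Real.sqrt v)⁻¹)
        ≤ (2 ^ ((1/4):ℝ) * (1 + v^2) ^ ((1/4):ℝ) * (1 + (v-b)^2) ^ ((1/4):ℝ))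
          * ((1 + (v-b)^2)⁻¹ * (Real.sqrt v)⁻¹) := by
          apply mul_le_mul_of_nonneg_right h1 (by positivity)
      _ = 2 ^ ((1/4):ℝ) * ((1 + v^2) ^ ((1/4):ℝ) * (Real.sqrt v)⁻¹)
          * ((1 + (v-b)^2) ^ ((1/4):ℝ) * (1 + (v-b)^2)⁻¹) := by ring
      _ = 2 ^ ((1/4):ℝ) * ((1 + v^2) ^ ((1/4):ℝ) * (Real.sqrt v)⁻¹)
          * (1 + (v-b)^2) ^ (-(3/4):ℝ) := by rw [h2]
      _ ≤ 4 * ((Set.Ioo (0:ℝ) 1).indicator (fun t => (Real.sqrt t)⁻¹) v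
          + (1 + (v - b)^2) ^ (-(3/4) : ℝ)) := by
          rcases le_or_gt 1 v with h1v | h1v
          · -- v ≥ 1 : indicator is 0, and (1+v²)^{1/4} ≤ 2^{1/4} √v
            have hind : (Set.Ioo (0:ℝ) 1).indicator (fun t => (Real.sqrt t)⁻¹) v = 0 :=
              Set.indicator_of_notMem (fun h => absurd h.2 (not_lt.2 h1v)) _
            have hv2 : ((v^2 : ℝ)) ^ ((1/4):ℝ) = Real.sqrt v := by
              rw [← Real.rpow_natCast v 2, ← Real.rpow_mul hv.le, Real.sqrt_eq_rpow]
              norm_num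
            have hAle : (1 + v^2) ^ ((1/4):ℝ) ≤ 2 ^ ((1/4):ℝ) * Real.sqrt v := by
              have h := Real.rpow_le_rpow (by linarith) (show (1+v^2 : ℝ) ≤ 2 * v^2 by nlinarith)
                (by norm_num : (0:ℝ) ≤ 1/4)
              rwa [Real.mul_rpow (by norm_num) (by positivity), hv2] at h
            have hstep : (1 + v^2) ^ ((1/4):ℝ) * (Real.sqrt v)⁻¹ ≤ 2 ^ ((1/4):ℝ) := by
              calc (1 + v^2) ^ ((1/4):ℝ) * (Real.sqrt v)⁻¹
                  ≤ (2 ^ ((1/4):ℝ) * Real.sqrt v) * (Real.sqrt v)⁻¹ := by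
                    apply mul_le_mul_of_nonneg_right hAle (by positivity)
                _ = 2 ^ ((1/4):ℝ) := by field_simp
            rw [hind, zero_add]
            calc 2 ^ ((1/4):ℝ) * ((1 + v^2) ^ ((1/4):ℝ) * (Real.sqrt v)⁻¹)
                * (1 + (v-b)^2) ^ (-(3/4):ℝ)
                ≤ 2 * 2 * (1 + (v-b)^2) ^ (-(3/4):ℝ) := by
                  apply mul_le_mul_of_nonneg_right _ (by positivity)
                  exact mul_le_mul htwo (hstep.trans htwo) (by positivity) (by norm_num)
              _ = 4 * (1 + (v-b)^2) ^ (-(3/4):ℝ) := by ring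
          · -- v < 1 : indicator is (√v)⁻¹
            have hind : (Set.Ioo (0:ℝ) 1).indicator (fun t => (Real.sqrt t)⁻¹) v
                = (Real.sqrt v)⁻¹ := Set.indicator_of_mem (show v ∈ Set.Ioo (0:ℝ) 1 from ⟨hv, h1v⟩) _
            have hAle : (1 + v^2) ^ ((1/4):ℝ) ≤ 2 := by
              calc (1 + v^2) ^ ((1/4):ℝ) ≤ (2:ℝ) ^ ((1/4):ℝ) :=
                Real.rpow_le_rpow (by linarith) (by nlinarith) (by norm_num)
              _ ≤ 2 := htwo
            have hBle : (1 + (v-b)^2) ^ (-(3/4):ℝ) ≤ 1 :=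
              Real.rpow_le_one_of_one_le_of_nonpos hB (by norm_num)
            have hBnn : (0:ℝ) ≤ (1 + (v-b)^2) ^ (-(3/4):ℝ) := by positivity
            rw [hind]
            calc 2 ^ ((1/4):ℝ) * ((1 + v^2) ^ ((1/4):ℝ) * (Real.sqrt v)⁻¹)
                * (1 + (v-b)^2) ^ (-(3/4):ℝ)
                ≤ 2 * (2 * (Real.sqrt v)⁻¹) * 1 := by
                  apply mul_le_mul _ hBle hBnn (by positivity)
                  exact mul_le_mul htwo (mul_le_mul_of_nonneg_right hAle (by positivity))
                    (by positivity) (by norm_num)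
              _ = 4 * (Real.sqrt v)⁻¹ := by ring
              _ ≤ 4 * ((Real.sqrt v)⁻¹ + (1 + (v-b)^2) ^ (-(3/4):ℝ)) := by nlinarith
  calc (1 + (v - b)^2)⁻¹ * (Real.sqrt v)⁻¹
      = (1 + b^2) ^ (-(1/4):ℝ) * ((1 + b^2) ^ ((1/4):ℝ)
        * ((1 + (v-b)^2)⁻¹ * (Real.sqrt v)⁻¹)) := by
        rw [← mul_assoc, ← Real.rpow_add (by linarith)]
        norm_num
    _ ≤ (1 + b^2) ^ (-(1/4):ℝ) * (4 * ((Set.Ioo (0:ℝ) 1).indicator (fun t => (Real.sqrt t)⁻¹) v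
          + (1 + (v - b)^2) ^ (-(3/4) : ℝ)) * 1) := by
        rw [mul_one]
        exact mul_le_mul_of_nonneg_left hmain (by positivity)
    _ = 4 * (1 + b^2) ^ (-(1/4) : ℝ) *
        ((Set.Ioo (0:ℝ) 1).indicator (fun t => (Real.sqrt t)⁻¹) v
          + (1 + (v - b)^2) ^ (-(3/4) : ℝ)) := by ring

lemma aux_key_int : ∃ C1 : ℝ, 0 < C1 ∧ ∀ b T : ℝ,
    ∫ v in Set.Ioo (0:ℝ) T, (1 + (v - b)^2)⁻¹ * (Real.sqrt v)⁻¹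
      ≤ C1 * (1 + b^2) ^ (-(1/4) : ℝ) := by
  set M : ℝ := ∫ x : ℝ, (1 + x^2) ^ (-(3/4) : ℝ) with hM
  have hMnn : 0 ≤ M := integral_nonneg (fun x => by positivity)
  refine ⟨4 * (2 + M), by positivity, fun b T => ?_⟩
  have hqb : Integrable (fun v : ℝ => (1 + (v - b)^2) ^ (-(3/4) : ℝ)) :=
    aux_q_integrable.comp_sub_right b
  -- the indicator function is globally integrable
  have hind : Integrable ((Set.Ioo (0:ℝ) 1).indicator (fun t => (Real.sqrt t)⁻¹)) :=
    (integrable_indicator_iff measurableSet_Ioo).2 (aux_sqrt_inv_integrableOn 1)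
  set g : ℝ → ℝ := fun v => 4 * (1 + b^2) ^ (-(1/4) : ℝ) *
      ((Set.Ioo (0:ℝ) 1).indicator (fun t => (Real.sqrt t)⁻¹) v
        + (1 + (v - b)^2) ^ (-(3/4) : ℝ)) with hg
  have hgint : Integrable g := ((hind.add hqb).const_mul _)
  have hmono : ∫ v in Set.Ioo (0:ℝ) T, (1 + (v - b)^2)⁻¹ * (Real.sqrt v)⁻¹
      ≤ ∫ v in Set.Ioo (0:ℝ) T, g v := by
    refine integral_mono_of_nonneg ?_ hgint.integrableOn ?_
    · exact Filter.Eventually.of_forall (fun v => by positivity)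
    · exact (MeasureTheory.ae_restrict_iff' measurableSet_Ioo).2
        (Filter.Eventually.of_forall (fun v hv => aux_ptwise b hv.1))
  refine hmono.trans ?_
  have hsplit : ∫ v in Set.Ioo (0:ℝ) T, g v = 4 * (1 + b^2) ^ (-(1/4) : ℝ) *
      ((∫ v in Set.Ioo (0:ℝ) T, (Set.Ioo (0:ℝ) 1).indicator (fun t => (Real.sqrt t)⁻¹) v)
        + ∫ v in Set.Ioo (0:ℝ) T, (1 + (v - b)^2) ^ (-(3/4) : ℝ)) := by
    simp only [hg]
    rw [MeasureTheory.integral_const_mul]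
    rw [MeasureTheory.integral_add (hind.integrableOn) (hqb.integrableOn)]
  rw [hsplit]
  have hle1 : ∫ v in Set.Ioo (0:ℝ) T,
      (Set.Ioo (0:ℝ) 1).indicator (fun t => (Real.sqrt t)⁻¹) v ≤ 2 := by
    rw [setIntegral_indicator measurableSet_Ioo]
    have hsub : Set.Ioo (0:ℝ) T ∩ Set.Ioo (0:ℝ) 1 ⊆ Set.Ioo (0:ℝ) 1 :=
      Set.inter_subset_right
    calc ∫ v in Set.Ioo (0:ℝ) T ∩ Set.Ioo (0:ℝ) 1, (Real.sqrt v)⁻¹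
        ≤ ∫ v in Set.Ioo (0:ℝ) 1, (Real.sqrt v)⁻¹ := by
          refine setIntegral_mono_set (aux_sqrt_inv_integrableOn 1)
            (Filter.Eventually.of_forall (fun v => by positivity))
            (HasSubset.Subset.eventuallyLE hsub)
      _ = 2 := aux_sqrt_inv_integral
  have hle2 : ∫ v in Set.Ioo (0:ℝ) T, (1 + (v - b)^2) ^ (-(3/4) : ℝ) ≤ M := by
    calc ∫ v in Set.Ioo (0:ℝ) T, (1 + (v - b)^2) ^ (-(3/4) : ℝ)
        ≤ ∫ v : ℝ, (1 + (v - b)^2) ^ (-(3/4) : ℝ) :=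
          setIntegral_le_integral hqb (Filter.Eventually.of_forall (fun v => by positivity))
      _ = M := by rw [hM]; exact integral_sub_right_eq_self (fun x => (1 + x^2) ^ (-(3/4):ℝ)) b
  have hGnn : (0:ℝ) ≤ (1 + b^2) ^ (-(1/4) : ℝ) := by positivity
  calc 4 * (1 + b^2) ^ (-(1/4) : ℝ) *
      ((∫ v in Set.Ioo (0:ℝ) T, (Set.Ioo (0:ℝ) 1).indicator (fun t => (Real.sqrt t)⁻¹) v)
        + ∫ v in Set.Ioo (0:ℝ) T, (1 + (v - b)^2) ^ (-(3/4) : ℝ))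
      ≤ 4 * (1 + b^2) ^ (-(1/4) : ℝ) * (2 + M) := by
        apply mul_le_mul_of_nonneg_left (add_le_add hle1 hle2) (by positivity)
    _ = 4 * (2 + M) * (1 + b^2) ^ (-(1/4) : ℝ) := by ring
open FourierTransform in
lemma aux_decay (α : SchwartzMap ℝ ℂ) :
    ∃ D : ℝ, 0 < D ∧ ∀ x : ℝ, ‖𝓕 (⇑α) x‖ ≤ D * (1 + x^2)⁻¹ := by
  set φ := SchwartzMap.fourierTransformCLM ℂ α with hφ
  obtain ⟨C0, hC0, h0⟩ := φ.decay 0 0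
  obtain ⟨C2, hC2, h2⟩ := φ.decay 2 0
  refine ⟨C0 + C2, by linarith, fun x => ?_⟩
  have e : 𝓕 (⇑α) x = φ x := rfl
  have a0 := h0 x
  have a2 := h2 x
  rw [norm_iteratedFDeriv_zero] at a0 a2
  rw [pow_zero, one_mul] at a0
  rw [Real.norm_eq_abs, sq_abs] at a2
  have hpos : (0:ℝ) < 1 + x^2 := by positivity
  rw [e]
  have hkey : ‖φ x‖ * (1 + x^2) ≤ C0 + C2 := by nlinarith [norm_nonneg (φ x)]
  calc ‖φ x‖ = ‖φ x‖ * (1 + x^2) * (1 + x^2)⁻¹ := by field_simp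
    _ ≤ (C0 + C2) * (1 + x^2)⁻¹ := mul_le_mul_of_nonneg_right hkey (by positivity)

open Real SchwartzMap FourierTransform




open Real SchwartzMap FourierTransform

/-- For a Schwartz function `α` there is `C` such that for all `r > 1` and `m ∈ ℝ`,
`∫₀^{π/4} |α̂(m − r cos θ)| dθ ≤ C r^{-1/2} ⟨r − |m|⟩^{-1/2}`. -/
theorem bessel_kernel_near_zero (α : SchwartzMap ℝ ℂ) :
    ∃ C : ℝ, 0 < C ∧ ∀ m r : ℝ, 1 < r →
      (∫ θ in (0:ℝ)..(π / 4), ‖𝓕 (⇑α) (m - r * Real.cos θ)‖)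
        ≤ C * r ^ (-(1/2) : ℝ) * (1 + (r - |m|) ^ 2) ^ (-(1/4) : ℝ) := by
  obtain ⟨D, hD, hDbd⟩ := aux_decay α
  obtain ⟨C1, hC1, hkey⟩ := aux_key_int
  have hcont : Continuous (𝓕 (⇑α)) := (SchwartzMap.fourierTransformCLM ℂ α).continuous
  refine ⟨D * C1, by positivity, fun m r hr => ?_⟩
  have hrpos : (0:ℝ) < r := by linarith
  have hπ : (0:ℝ) < π := Real.pi_pos
  have hπ4 : (0:ℝ) < π/4 := by positivity
  have hπ4π : π/4 ≤ π := by linarith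
  set b : ℝ := r - m with hb
  set U : ℝ := 1 - Real.sqrt 2 / 2 with hU
  have hs2pos : (0:ℝ) < Real.sqrt 2 := Real.sqrt_pos.2 (by norm_num)
  have hs2lt : Real.sqrt 2 < 2 := by
    nlinarith [Real.sq_sqrt (by norm_num : (0:ℝ) ≤ 2), Real.sqrt_nonneg 2]
  have hU0 : 0 < U := by rw [hU]; linarith
  have hU1 : U < 1 := by rw [hU]; linarith
  set f : ℝ → ℝ := fun u => (Real.sqrt (2*u - u^2))⁻¹ * ‖𝓕 (⇑α) (r*u - b)‖ with hf
  set h : ℝ → ℝ := fun u => D * (1 + (r*u - b)^2)⁻¹ * (Real.sqrt u)⁻¹ with hh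
  set w : ℝ → ℝ := fun v => (1 + (v - b)^2)⁻¹ * (Real.sqrt v)⁻¹ with hw
  -- Step A
  rw [intervalIntegral.integral_of_le hπ4.le, MeasureTheory.integral_Ioc_eq_integral_Ioo]
  -- Step B: substitution u = 1 - cos θ
  have hderiv : ∀ θ ∈ Set.Ioo (0:ℝ) (π/4),
      HasDerivWithinAt (fun t => 1 - Real.cos t) (Real.sin θ) (Set.Ioo 0 (π/4)) θ := by
    intro θ _
    simpa using ((Real.hasDerivAt_cos θ).const_sub 1).hasDerivWithinAt
  have hinj : Set.InjOn (fun t => 1 - Real.cos t) (Set.Ioo (0:ℝ) (π/4)) := by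
    intro x hx y hy hxy
    have h1 : Real.cos x = Real.cos y := by dsimp at hxy; linarith
    exact Real.injOn_cos ⟨hx.1.le, by linarith [hx.2]⟩ ⟨hy.1.le, by linarith [hy.2]⟩ h1
  have hsub1 : ∫ u in (fun t => 1 - Real.cos t) '' Set.Ioo (0:ℝ) (π/4), f u
      = ∫ θ in Set.Ioo (0:ℝ) (π/4), ‖𝓕 (⇑α) (m - r * Real.cos θ)‖ := by
    rw [MeasureTheory.integral_image_eq_integral_abs_deriv_smul (f' := Real.sin)
      measurableSet_Ioo hderiv hinj f]
    refine MeasureTheory.setIntegral_congr_fun measurableSet_Ioo (fun θ hθ => ?_)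
    have hsθ : 0 < Real.sin θ := Real.sin_pos_of_pos_of_lt_pi hθ.1 (by linarith [hθ.2])
    have hss : 2*(1 - Real.cos θ) - (1 - Real.cos θ)^2 = Real.sin θ^2 := by
      nlinarith [Real.sin_sq_add_cos_sq θ]
    simp only [hf]
    rw [hss, Real.sqrt_sq hsθ.le, smul_eq_mul, abs_of_pos hsθ]
    rw [show r*(1 - Real.cos θ) - b = m - r*Real.cos θ by rw [hb]; ring]
    rw [← mul_assoc, mul_inv_cancel₀ hsθ.ne', one_mul]
  rw [← hsub1]
  -- Step C
  have himg : (fun t => 1 - Real.cos t) '' Set.Ioo (0:ℝ) (π/4) ⊆ Set.Ioo 0 U := by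
    rintro u ⟨θ, hθ, rfl⟩
    have hθπ : θ ∈ Set.Icc (0:ℝ) π := ⟨hθ.1.le, by linarith [hθ.2]⟩
    have hcos1 : Real.cos θ < Real.cos 0 :=
      Real.strictAntiOn_cos ⟨le_refl 0, hπ.le⟩ hθπ hθ.1
    rw [Real.cos_zero] at hcos1
    have hcos2 : Real.sqrt 2 / 2 < Real.cos θ := by
      have h2 := Real.strictAntiOn_cos hθπ ⟨hπ4.le, hπ4π⟩ hθ.2
      rwa [Real.cos_pi_div_four] at h2
    refine ⟨?_, ?_⟩
    · show (0:ℝ) < 1 - Real.cos θ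
      linarith
    · show 1 - Real.cos θ < U
      rw [hU]; linarith
  have hmf : Measurable f := by
    apply Measurable.mul
    · exact ((Real.continuous_sqrt.comp
        (((continuous_const.mul continuous_id).sub (continuous_pow 2)) : Continuous fun u : ℝ => 2*u - u^2)).measurable).inv
    · exact ((hcont.comp (((continuous_const.mul continuous_id).sub continuous_const) : Continuous fun u : ℝ => r*u - b)).norm).measurable
  have hmh : Measurable h := by
    apply Measurable.mul
    · exact measurable_const.mul
        (((continuous_const.add (((continuous_const.mul continuous_id).sub continuous_const).pow 2)) : Continuous fun u : ℝ => 1 + (r*u - b)^2).measurable.inv)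
    · exact Real.continuous_sqrt.measurable.inv
  have hhint : MeasureTheory.IntegrableOn h (Set.Ioo 0 U) := by
    refine MeasureTheory.Integrable.mono' ((aux_sqrt_inv_integrableOn U).const_mul D)
      hmh.aestronglyMeasurable (Filter.Eventually.of_forall (fun u => ?_))
    rw [Real.norm_eq_abs, abs_of_nonneg (by simp only [hh]; positivity)]
    simp only [hh]
    have h1X : (1:ℝ) ≤ 1 + (r*u - b)^2 := by nlinarith [sq_nonneg (r*u - b)]
    have hinv1 : (1 + (r*u - b)^2)⁻¹ ≤ 1 := by
      simpa using inv_anti₀ one_pos h1X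
    calc D * (1 + (r*u - b)^2)⁻¹ * (Real.sqrt u)⁻¹ ≤ D * 1 * (Real.sqrt u)⁻¹ := by
          apply mul_le_mul_of_nonneg_right
            (mul_le_mul_of_nonneg_left hinv1 hD.le) (by positivity)
      _ = D * (Real.sqrt u)⁻¹ := by ring
  have hfbd : ∀ u ∈ Set.Ioo (0:ℝ) U, f u ≤ h u := by
    intro u hu
    simp only [hf, hh]
    have hsu : 0 < Real.sqrt u := Real.sqrt_pos.2 hu.1
    have hmono : Real.sqrt u ≤ Real.sqrt (2*u - u^2) :=
      Real.sqrt_le_sqrt (by nlinarith [hu.1, hu.2.trans hU1])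
    have hinv : (Real.sqrt (2*u - u^2))⁻¹ ≤ (Real.sqrt u)⁻¹ := inv_anti₀ hsu hmono
    calc (Real.sqrt (2*u - u^2))⁻¹ * ‖𝓕 (⇑α) (r*u - b)‖
        ≤ (Real.sqrt u)⁻¹ * (D * (1 + (r*u - b)^2)⁻¹) :=
          mul_le_mul hinv (hDbd _) (norm_nonneg _) (by positivity)
      _ = D * (1 + (r*u - b)^2)⁻¹ * (Real.sqrt u)⁻¹ := by ring
  have hfint : MeasureTheory.IntegrableOn f (Set.Ioo 0 U) := by
    refine MeasureTheory.Integrable.mono' hhint hmf.aestronglyMeasurable ?_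
    refine (MeasureTheory.ae_restrict_iff' measurableSet_Ioo).2
      (Filter.Eventually.of_forall (fun u hu => ?_))
    rw [Real.norm_eq_abs, abs_of_nonneg (by simp only [hf]; positivity)]
    exact hfbd u hu
  have hstepC : ∫ u in (fun t => 1 - Real.cos t) '' Set.Ioo (0:ℝ) (π/4), f u
      ≤ ∫ u in Set.Ioo (0:ℝ) U, h u := by
    calc ∫ u in (fun t => 1 - Real.cos t) '' Set.Ioo (0:ℝ) (π/4), f u
        ≤ ∫ u in Set.Ioo (0:ℝ) U, f u :=
          MeasureTheory.setIntegral_mono_set hfint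
            (Filter.Eventually.of_forall (fun u => by simp only [hf]; positivity))
            (HasSubset.Subset.eventuallyLE himg)
      _ ≤ ∫ u in Set.Ioo (0:ℝ) U, h u :=
          MeasureTheory.setIntegral_mono_on hfint hhint measurableSet_Ioo hfbd
  -- Step D: substitution v = r u
  set k : ℝ → ℝ := fun v => r⁻¹ * (D * (1 + (v - b)^2)⁻¹ * (Real.sqrt (v / r))⁻¹) with hk
  have hderiv2 : ∀ u ∈ Set.Ioo (0:ℝ) U, HasDerivWithinAt (fun u => r * u) r (Set.Ioo 0 U) u :=
    fun u _ => by simpa using ((hasDerivAt_id u).const_mul r).hasDerivWithinAt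
  have himg2 : (fun u => r * u) '' Set.Ioo (0:ℝ) U = Set.Ioo 0 (r*U) := by
    have := Set.image_mul_left_Ioo hrpos 0 U
    simpa using this
  have hinj2 : Set.InjOn (fun u => r * u) (Set.Ioo (0:ℝ) U) :=
    fun x _ y _ hxy => mul_left_cancel₀ hrpos.ne' hxy
  have hsub2 : ∫ v in Set.Ioo (0:ℝ) (r*U), k v = ∫ u in Set.Ioo (0:ℝ) U, h u := by
    rw [← himg2, MeasureTheory.integral_image_eq_integral_abs_deriv_smul (f' := fun _ => r)
      measurableSet_Ioo hderiv2 hinj2 k]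
    refine MeasureTheory.setIntegral_congr_fun measurableSet_Ioo (fun u hu => ?_)
    simp only [hk, hh, smul_eq_mul]
    rw [abs_of_pos hrpos, mul_div_cancel_left₀ u hrpos.ne']
    rw [← mul_assoc, mul_inv_cancel₀ hrpos.ne', one_mul]
  have hsrpos : 0 < Real.sqrt r := Real.sqrt_pos.2 hrpos
  have hrr : Real.sqrt r * Real.sqrt r = r := Real.mul_self_sqrt hrpos.le
  have hrs : r⁻¹ * Real.sqrt r = (Real.sqrt r)⁻¹ := by
    field_simp [hrpos.ne', hsrpos.ne']
    rw [Real.sq_sqrt hrpos.le]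
  have hkw : ∀ v ∈ Set.Ioo (0:ℝ) (r*U), k v = (Real.sqrt r)⁻¹ * D * w v := by
    intro v hv
    simp only [hk, hw]
    rw [Real.sqrt_div hv.1.le r, inv_div]
    calc r⁻¹ * (D * (1 + (v - b)^2)⁻¹ * (Real.sqrt r / Real.sqrt v))
        = (r⁻¹ * Real.sqrt r) * D * ((1 + (v - b)^2)⁻¹ * (Real.sqrt v)⁻¹) := by
          rw [div_eq_mul_inv]; ring
      _ = (Real.sqrt r)⁻¹ * D * ((1 + (v - b)^2)⁻¹ * (Real.sqrt v)⁻¹) := by rw [hrs]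
  have hstepD : ∫ u in Set.Ioo (0:ℝ) U, h u
      = (Real.sqrt r)⁻¹ * D * ∫ v in Set.Ioo (0:ℝ) (r*U), w v := by
    rw [← hsub2, MeasureTheory.setIntegral_congr_fun measurableSet_Ioo hkw]
    simp only [hw]
    rw [MeasureTheory.integral_const_mul]
  -- Step E and conclusion
  have hE : ∫ v in Set.Ioo (0:ℝ) (r*U), w v ≤ C1 * (1 + b^2) ^ (-(1/4) : ℝ) := hkey b (r*U)
  have hr12 : r ^ (-(1/2) : ℝ) = (Real.sqrt r)⁻¹ := by
    rw [Real.sqrt_eq_rpow, ← Real.rpow_neg hrpos.le]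
  have habs : (1 + b^2) ^ (-(1/4) : ℝ) ≤ (1 + (r - |m|)^2) ^ (-(1/4) : ℝ) := by
    have h1 : (1 + (r - |m|)^2) ≤ 1 + b^2 := by
      rw [hb]
      nlinarith [le_abs_self m, abs_nonneg m, sq_abs m, hrpos]
    have h2 : (0:ℝ) < 1 + (r - |m|)^2 := by positivity
    rw [Real.rpow_neg h2.le, Real.rpow_neg (by positivity : (0:ℝ) ≤ 1 + b^2)]
    exact inv_anti₀ (Real.rpow_pos_of_pos h2 _) (Real.rpow_le_rpow h2.le h1 (by norm_num))
  calc ∫ u in (fun t => 1 - Real.cos t) '' Set.Ioo (0:ℝ) (π/4), f u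
      ≤ ∫ u in Set.Ioo (0:ℝ) U, h u := hstepC
    _ = (Real.sqrt r)⁻¹ * D * ∫ v in Set.Ioo (0:ℝ) (r*U), w v := hstepD
    _ ≤ (Real.sqrt r)⁻¹ * D * (C1 * (1 + b^2) ^ (-(1/4) : ℝ)) :=
        mul_le_mul_of_nonneg_left hE (by positivity)
    _ = D * C1 * (Real.sqrt r)⁻¹ * (1 + b^2) ^ (-(1/4) : ℝ) := by ring
    _ ≤ D * C1 * (Real.sqrt r)⁻¹ * (1 + (r - |m|)^2) ^ (-(1/4) : ℝ) :=
        mul_le_mul_of_nonneg_left habs (by positivity)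
    _ = D * C1 * r ^ (-(1/2) : ℝ) * (1 + (r - |m|)^2) ^ (-(1/4) : ℝ) := by rw [hr12]
end

section
/- There is an absolute constant C such that for all integers k ≥ 1 and all real r > 1: ∫_{r/2 < m < r−1} ⟨m−r⟩^{−1} min(k²/d(m)², d(m)²/k²) dm ≤ C, where d(m) = √(r² − m²). -/
open Real

private lemma aux_weight (r m : ℝ) (h : m ≤ r - 1) :
    (1 + (m - r) ^ 2) ^ (-(1/2) : ℝ) ≤ (r - m)⁻¹ := by
  have ht : 1 ≤ r - m := by linarith
  have hpos : (0:ℝ) < (r - m) ^ 2 := by positivity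
  have key : ((r - m) ^ 2 : ℝ) ^ (-(1/2) : ℝ) = (r - m)⁻¹ := by
    rw [← Real.rpow_natCast (r - m) 2, ← Real.rpow_mul (by linarith)]
    norm_num [Real.rpow_neg_one]
  calc (1 + (m - r) ^ 2) ^ (-(1/2) : ℝ)
      ≤ ((r - m) ^ 2 : ℝ) ^ (-(1/2) : ℝ) := by
        apply Real.rpow_le_rpow_of_nonpos hpos (by nlinarith) (by norm_num)
    _ = (r - m)⁻¹ := key

private lemma aux_int (r a b : ℝ) (ha : a < r) (hb : b < r) :
    ∫ m in a..b, ((r - m) ^ 2)⁻¹ = (r - b)⁻¹ - (r - a)⁻¹ := by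
  have hconv : ∀ x : ℝ, ((x : ℝ) ^ 2)⁻¹ = x ^ (-2 : ℤ) := fun x => by
    norm_num [zpow_neg, zpow_two, sq]
  simp_rw [hconv]
  rw [intervalIntegral.integral_comp_sub_left (fun x => x ^ (-2 : ℤ)) r,
    integral_zpow (Or.inr ⟨by norm_num, ?_⟩)]
  · norm_num
    ring
  · intro hmem
    rw [Set.mem_uIcc] at hmem
    rcases hmem with ⟨h1, h2⟩ | ⟨h1, h2⟩ <;> linarith

set_option maxHeartbeats 1000000 in
/-- There is an absolute constant `C` such that for all integers `k ≥ 1` and all `r > 1`,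
`∫_{r/2}^{r−1} ⟨m−r⟩⁻¹ min(k²/d(m)², d(m)²/k²) dm ≤ C` with `d(m) = √(r²−m²)`. -/
theorem min_weight_integral_bound :
    ∃ C : ℝ, 0 < C ∧ ∀ k : ℕ, 1 ≤ k → ∀ r : ℝ, 1 < r →
      (∫ m in (r / 2)..(r - 1),
          (1 + (m - r) ^ 2) ^ (-(1/2) : ℝ) *
            min ((k : ℝ) ^ 2 / (r ^ 2 - m ^ 2)) ((r ^ 2 - m ^ 2) / (k : ℝ) ^ 2)) ≤ C := by
  refine ⟨3, by norm_num, ?_⟩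
  intro k hk r hr
  have hk1 : (1:ℝ) ≤ (k:ℝ) := by exact_mod_cast hk
  have hk2 : (1:ℝ) ≤ (k:ℝ) ^ 2 := by nlinarith
  have hkpos : (0:ℝ) < (k:ℝ) ^ 2 := by positivity
  set f : ℝ → ℝ := fun m => (1 + (m - r) ^ 2) ^ (-(1/2) : ℝ) *
      min ((k : ℝ) ^ 2 / (r ^ 2 - m ^ 2)) ((r ^ 2 - m ^ 2) / (k : ℝ) ^ 2) with hf
  have hD : ∀ m ∈ Set.uIcc (r/2) (r-1), 0 < r ^ 2 - m ^ 2 := by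
    intro m hm
    rw [Set.mem_uIcc] at hm
    rcases hm with ⟨h1, h2⟩ | ⟨h1, h2⟩ <;> nlinarith
  have hfnn : ∀ m ∈ Set.uIcc (r/2) (r-1), 0 ≤ f m := by
    intro m hm
    have hDm := hD m hm
    apply mul_nonneg (Real.rpow_nonneg (by positivity) _)
    exact le_min (by positivity) (by positivity)
  have hc : ContinuousOn f (Set.uIcc (r/2) (r-1)) := by
    apply ContinuousOn.mul
    · apply ContinuousOn.rpow_const
      · fun_prop
      · intro x _
        left
        positivity
    · have c1 : ContinuousOn (fun m : ℝ => (k:ℝ)^2 / (r^2 - m^2))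
          (Set.uIcc (r/2) (r-1)) :=
        ContinuousOn.div continuousOn_const (by fun_prop)
          (fun x hx => (hD x hx).ne')
      have c2 : ContinuousOn (fun m : ℝ => (r^2 - m^2) / (k:ℝ)^2)
          (Set.uIcc (r/2) (r-1)) :=
        ContinuousOn.div (by fun_prop) continuousOn_const (fun x _ => hkpos.ne')
      exact fun x hx => (c1 x hx).min (c2 x hx)
  have hInt : IntervalIntegrable f MeasureTheory.volume (r/2) (r-1) :=
    hc.intervalIntegrable
  by_cases hr2 : r ≤ 2
  · -- reversed interval: integral is nonpositive
    have hba : r - 1 ≤ r/2 := by linarith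
    rw [intervalIntegral.integral_symm]
    have h0 : 0 ≤ ∫ m in (r-1)..(r/2), f m :=
      intervalIntegral.integral_nonneg hba
        (fun u hu => hfnn u (by rw [Set.uIcc_of_ge hba]; exact hu))
    linarith
  push_neg at hr2
  have hab : r/2 ≤ r - 1 := by linarith
  -- pointwise bounds
  have hb1 : ∀ m ∈ Set.Icc (r/2) (r-1), f m ≤ (k:ℝ)^2 / r * ((r - m) ^ 2)⁻¹ := by
    rintro m ⟨h1, h2⟩
    have ht : 1 ≤ r - m := by linarith
    have hrm : (0:ℝ) < r - m := by linarith
    have hDm : 0 < r ^ 2 - m ^ 2 := by nlinarith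
    have hw := aux_weight r m h2
    have hmin : min ((k:ℝ)^2 / (r^2 - m^2)) ((r^2 - m^2) / (k:ℝ)^2)
        ≤ (k:ℝ)^2 / (r * (r - m)) := by
      refine (min_le_left _ _).trans ?_
      rw [div_le_div_iff₀ hDm (by nlinarith)]
      nlinarith [mul_nonneg (mul_nonneg hkpos.le (by linarith : (0:ℝ) ≤ m)) hrm.le]
    have hminnn : 0 ≤ min ((k:ℝ)^2 / (r^2 - m^2)) ((r^2 - m^2) / (k:ℝ)^2) :=
      le_min (by positivity) (by positivity)
    calc f m ≤ (r - m)⁻¹ * ((k:ℝ)^2 / (r * (r - m))) :=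
          mul_le_mul hw hmin hminnn (by positivity)
      _ = (k:ℝ)^2 / r * ((r - m) ^ 2)⁻¹ := by
          field_simp
  have hb2 : ∀ m ∈ Set.Icc (r/2) (r-1), f m ≤ 2 * r / (k:ℝ)^2 := by
    rintro m ⟨h1, h2⟩
    have ht : 1 ≤ r - m := by linarith
    have hrm : (0:ℝ) < r - m := by linarith
    have hDm : 0 < r ^ 2 - m ^ 2 := by nlinarith
    have hw := aux_weight r m h2
    have hminnn : 0 ≤ min ((k:ℝ)^2 / (r^2 - m^2)) ((r^2 - m^2) / (k:ℝ)^2) :=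
      le_min (by positivity) (by positivity)
    calc f m ≤ (r - m)⁻¹ * ((r^2 - m^2) / (k:ℝ)^2) :=
          mul_le_mul hw (min_le_right _ _) hminnn (by positivity)
      _ ≤ (r - m)⁻¹ * ((2 * r * (r - m)) / (k:ℝ)^2) := by
          gcongr
          nlinarith
      _ = 2 * r / (k:ℝ)^2 := by
          field_simp
  -- integrability of the comparison function
  have hg1c : ∀ a b : ℝ, a < r → b < r →
      IntervalIntegrable (fun m => (k:ℝ)^2 / r * ((r - m) ^ 2)⁻¹)
        MeasureTheory.volume a b := by
    intro a b ha hb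
    apply ContinuousOn.intervalIntegrable
    apply ContinuousOn.mul continuousOn_const
    apply ContinuousOn.inv₀ (by fun_prop)
    intro x hx
    rw [Set.mem_uIcc] at hx
    have hxr : x < r := by rcases hx with ⟨_, h2⟩ | ⟨_, h2⟩ <;> linarith
    exact pow_ne_zero 2 (sub_ne_zero.mpr hxr.ne')
  by_cases hA : (k:ℝ)^2 ≤ r
  · -- case k² ≤ r
    calc (∫ m in (r/2)..(r-1), f m)
        ≤ ∫ m in (r/2)..(r-1), (k:ℝ)^2 / r * ((r - m) ^ 2)⁻¹ :=
          intervalIntegral.integral_mono_on hab hInt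
            (hg1c _ _ (by linarith) (by linarith)) hb1
      _ = (k:ℝ)^2 / r * ((r - (r-1))⁻¹ - (r - r/2)⁻¹) := by
          rw [intervalIntegral.integral_const_mul,
            aux_int r (r/2) (r-1) (by linarith) (by linarith)]
      _ ≤ 3 := by
          have h1 : (k:ℝ)^2 / r ≤ 1 := by
            rw [div_le_one (by linarith)]; exact hA
          have h2 : (0:ℝ) ≤ (k:ℝ)^2 / r := by positivity
          have h3 : (0:ℝ) ≤ (r - r/2)⁻¹ := by
            apply inv_nonneg.mpr; linarith
          have h4 : (r - (r - 1))⁻¹ = 1 := by norm_num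
          rw [h4]
          nlinarith [mul_nonneg h2 h3]
  push_neg at hA
  by_cases hB : r ^ 2 ≤ 2 * (k:ℝ)^2
  · -- whole interval with constant bound
    calc (∫ m in (r/2)..(r-1), f m)
        ≤ ∫ _m in (r/2)..(r-1), 2 * r / (k:ℝ)^2 :=
          intervalIntegral.integral_mono_on hab hInt intervalIntegrable_const hb2
      _ = (r - 1 - r/2) * (2 * r / (k:ℝ)^2) := by
          rw [intervalIntegral.integral_const, smul_eq_mul]
      _ ≤ 3 := by
          rw [show (r - 1 - r/2) * (2 * r / (k:ℝ)^2)
              = ((r - 1 - r/2) * (2 * r)) / (k:ℝ)^2 by ring,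
            div_le_iff₀ hkpos]
          nlinarith
  push_neg at hB
  -- split at p = r - k²/r
  set p : ℝ := r - (k:ℝ)^2 / r with hpdef
  have hrpos : (0:ℝ) < r := by linarith
  have hapos : (0:ℝ) < (k:ℝ)^2 / r := by positivity
  have hp1 : r/2 < p := by
    have : (k:ℝ)^2 / r < r / 2 := by
      rw [div_lt_div_iff₀ hrpos (by norm_num)]
      nlinarith
    simp only [hpdef]
    linarith
  have hp2 : p < r - 1 := by
    have : 1 < (k:ℝ)^2 / r := by
      rw [lt_div_iff₀ hrpos]
      linarith
    simp only [hpdef]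
    linarith
  have hsub1 : IntervalIntegrable f MeasureTheory.volume (r/2) p :=
    hInt.mono_set (Set.uIcc_subset_uIcc (Set.left_mem_uIcc)
      (by rw [Set.uIcc_of_le hab]; exact ⟨hp1.le, hp2.le⟩))
  have hsub2 : IntervalIntegrable f MeasureTheory.volume p (r-1) :=
    hInt.mono_set (Set.uIcc_subset_uIcc
      (by rw [Set.uIcc_of_le hab]; exact ⟨hp1.le, hp2.le⟩) (Set.right_mem_uIcc))
  have hsplit : (∫ m in (r/2)..(r-1), f m)
      = (∫ m in (r/2)..p, f m) + ∫ m in p..(r-1), f m :=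
    (intervalIntegral.integral_add_adjacent_intervals hsub1 hsub2).symm
  have hrp : r - p = (k:ℝ)^2 / r := by simp [hpdef]
  have hpiece1 : (∫ m in (r/2)..p, f m) ≤ 1 := by
    calc (∫ m in (r/2)..p, f m)
        ≤ ∫ m in (r/2)..p, (k:ℝ)^2 / r * ((r - m) ^ 2)⁻¹ :=
          intervalIntegral.integral_mono_on hp1.le hsub1
            (hg1c _ _ (by linarith) (by linarith))
            (fun x hx => hb1 x ⟨hx.1, hx.2.trans hp2.le⟩)
      _ = (k:ℝ)^2 / r * ((r - p)⁻¹ - (r - r/2)⁻¹) := by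
          rw [intervalIntegral.integral_const_mul,
            aux_int r (r/2) p (by linarith) (by linarith)]
      _ ≤ 1 := by
          rw [hrp, mul_sub, mul_inv_cancel₀ hapos.ne']
          have h3 : (0:ℝ) ≤ (r - r/2)⁻¹ := by
            apply inv_nonneg.mpr; linarith
          nlinarith [mul_nonneg hapos.le h3]
  have hpiece2 : (∫ m in p..(r-1), f m) ≤ 2 := by
    calc (∫ m in p..(r-1), f m)
        ≤ ∫ _m in p..(r-1), 2 * r / (k:ℝ)^2 :=
          intervalIntegral.integral_mono_on hp2.le hsub2 intervalIntegrable_const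
            (fun x hx => hb2 x ⟨hp1.le.trans hx.1, hx.2⟩)
      _ = (r - 1 - p) * (2 * r / (k:ℝ)^2) := by
          rw [intervalIntegral.integral_const, smul_eq_mul]
      _ ≤ 2 := by
          have hlen : r - 1 - p = (k:ℝ)^2 / r - 1 := by rw [hpdef]; ring
          rw [hlen, show ((k:ℝ)^2 / r - 1) * (2 * r / (k:ℝ)^2)
              = 2 - 2 * r / (k:ℝ)^2 by field_simp]
          have : (0:ℝ) ≤ 2 * r / (k:ℝ)^2 := by positivity
          linarith
  rw [hsplit]
  linarith
end

section
/- Fix r ≥ m+1 with r/2 < m < 2r, r > 1, and let θ₀ ∈ (0, π/2] satisfy r cos θ₀ = m, with d = √(r²−m²) = r sin θ₀. Define φ(β) = m − r cos(θ₀ + β/d). Let θ₁ ∈ (0, π/4) satisfy (r/d) sin θ₁ = 1/2. Then for all β with θ = θ₀ + β/d ∈ [θ₁, 3π/4]: (i) 1/2 ≤ φ'(β) ≤ 1 + |φ(β)|, and (ii) |φ(β)| ≥ |β|/2. -/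
open Real

lemma sin_ge_aux {θ₁ u : ℝ} (h1 : 0 < θ₁) (h2 : θ₁ < π / 4)
    (hu : u ∈ Set.Icc θ₁ (3 * π / 4)) : Real.sin θ₁ ≤ Real.sin u := by
  have hπ := Real.pi_pos
  obtain ⟨hlo, hhi⟩ := hu
  rcases le_or_gt u (π / 2) with h | h
  · exact Real.strictMonoOn_sin.monotoneOn ⟨by linarith, by linarith⟩
      ⟨by linarith, h⟩ hlo
  · have h4 : Real.sin u = Real.sin (π - u) := (Real.sin_pi_sub u).symm
    rw [h4]
    exact Real.strictMonoOn_sin.monotoneOn ⟨by linarith, by linarith⟩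
      ⟨by linarith, by linarith⟩ (by linarith)

set_option maxHeartbeats 1600000 in
/-- Phase lemma (Lemma `lem-phi-pro`): with `r ≥ m+1`, `r/2 < m < 2r`, `r > 1`,
`θ₀ ∈ (0, π/2]` with `r cos θ₀ = m`, `d = √(r²−m²) = r sin θ₀`,
`θ₁ ∈ (0, π/4)` with `(r/d) sin θ₁ = 1/2`, and `φ(β) = m − r cos(θ₀ + β/d)`,
for all `β` with `θ₀ + β/d ∈ [θ₁, 3π/4]` one has
`1/2 ≤ φ'(β) ≤ 1 + |φ(β)|` and `|φ(β)| ≥ |β|/2`. -/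
theorem phase_function_properties
    (m r θ₀ θ₁ d : ℝ)
    (hmr : m + 1 ≤ r) (hm1 : r / 2 < m) (hm2 : m < 2 * r) (hr : 1 < r)
    (hθ₀ : θ₀ ∈ Set.Ioc 0 (π / 2)) (hcos : r * Real.cos θ₀ = m)
    (hd : d = Real.sqrt (r ^ 2 - m ^ 2)) (hdsin : d = r * Real.sin θ₀)
    (hθ₁ : θ₁ ∈ Set.Ioo 0 (π / 4)) (hsin1 : r / d * Real.sin θ₁ = 1 / 2) :
    ∀ β : ℝ, θ₀ + β / d ∈ Set.Icc θ₁ (3 * π / 4) →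
      (1 / 2 ≤ r / d * Real.sin (θ₀ + β / d)) ∧
      (r / d * Real.sin (θ₀ + β / d) ≤ 1 + |m - r * Real.cos (θ₀ + β / d)|) ∧
      (|β| / 2 ≤ |m - r * Real.cos (θ₀ + β / d)|) := by
  obtain ⟨hθ₀pos, hθ₀le⟩ := hθ₀
  obtain ⟨hθ₁pos, hθ₁lt⟩ := hθ₁
  have hπ := Real.pi_pos
  have hrpos : (0:ℝ) < r := by linarith
  have hmpos : (0:ℝ) < m := by linarith
  have hsin0pos : 0 < Real.sin θ₀ := Real.sin_pos_of_pos_of_lt_pi hθ₀pos (by linarith)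
  have hdpos : 0 < d := by rw [hdsin]; positivity
  have hd2 : d ^ 2 = r ^ 2 - m ^ 2 := by
    rw [hd]; exact Real.sq_sqrt (by nlinarith)
  clear hd
  have hsθ₀ : Real.sin θ₀ = d / r := by
    field_simp [hdsin]
    rw [hdsin]; ring
  have hcθ₀ : Real.cos θ₀ = m / r := by
    field_simp [← hcos]
    rw [← hcos]; ring
  have hsθ₁ : Real.sin θ₁ = d / (2 * r) := by
    have h := hsin1
    field_simp at h ⊢
    linarith
  have hθ₁θ₀ : θ₁ < θ₀ := by
    have hlt : Real.sin θ₁ < Real.sin θ₀ := by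
      rw [hsθ₁, hsθ₀]
      rw [div_lt_div_iff₀ (by positivity) hrpos]
      nlinarith
    exact (Real.strictMonoOn_sin.lt_iff_lt ⟨by linarith, by linarith⟩
      ⟨by linarith, hθ₀le⟩).mp hlt
  intro β hβ
  obtain ⟨hθlo, hθhi⟩ := hβ
  set θ := θ₀ + β / d with hθdef
  clear_value θ
  have hθpos : 0 < θ := lt_of_lt_of_le hθ₁pos hθlo
  -- Part 1
  have hsin_ge : Real.sin θ₁ ≤ Real.sin θ := sin_ge_aux hθ₁pos hθ₁lt ⟨hθlo, hθhi⟩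
  have part1 : 1 / 2 ≤ r / d * Real.sin θ := by
    calc (1:ℝ)/2 = r / d * Real.sin θ₁ := hsin1.symm
      _ ≤ r / d * Real.sin θ := by
          have : 0 < r / d := by positivity
          nlinarith
  refine ⟨part1, ?_, ?_⟩
  · -- Part 2
    have hphi : m - r * Real.cos θ = r * (Real.cos θ₀ - Real.cos θ) := by
      rw [← hcos]; ring
    have habs : |m - r * Real.cos θ| = r * |Real.cos θ₀ - Real.cos θ| := by
      rw [hphi, abs_mul, abs_of_pos hrpos]
    set s := (θ + θ₀) / 2 with hs
    clear_value s
    set t := (θ - θ₀) / 2 with ht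
    clear_value t
    have hsinsub : Real.sin θ - Real.sin θ₀ = 2 * Real.sin t * Real.cos s := by
      rw [hs, ht]; exact Real.sin_sub_sin θ θ₀
    have hcossub : Real.cos θ₀ - Real.cos θ = 2 * Real.sin s * Real.sin t := by
      have := Real.cos_sub_cos θ₀ θ
      have h1 : Real.sin ((θ₀ - θ) / 2) = -Real.sin t := by
        rw [ht, ← Real.sin_neg]; ring_nf
      rw [h1] at this
      have h2 : (θ₀ + θ) / 2 = s := by rw [hs]; ring
      rw [h2] at this
      linarith
    have hspos : 0 < s := by rw [hs]; linarith
    have hslt : s < π := by rw [hs]; linarith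
    have hsins : 0 ≤ Real.sin s := Real.sin_nonneg_of_nonneg_of_le_pi hspos.le hslt.le
    have habs2 : |Real.cos θ₀ - Real.cos θ| = 2 * Real.sin s * |Real.sin t| := by
      rw [hcossub, abs_mul, abs_of_nonneg (by positivity : (0:ℝ) ≤ 2 * Real.sin s)]
    -- key : sin θ ≤ sin θ₀ + d * |cos θ₀ - cos θ|
    have hkey : Real.sin θ ≤ Real.sin θ₀ + d * |Real.cos θ₀ - Real.cos θ| := by
      rcases le_or_gt t 0 with htle | htpos
      · -- θ ≤ θ₀ ≤ π/2, so cos s ≥ 0, sin t ≤ 0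
        have hθle : θ ≤ θ₀ := by rw [ht] at htle; linarith
        have hsle : s ≤ π / 2 := by rw [hs]; linarith
        have hcoss : 0 ≤ Real.cos s := Real.cos_nonneg_of_mem_Icc ⟨by linarith, hsle⟩
        have hsint : Real.sin t ≤ 0 := by
          have : Real.sin (-t) ≥ 0 := Real.sin_nonneg_of_nonneg_of_le_pi
            (by linarith) (by rw [ht]; linarith)
          rw [Real.sin_neg] at this; linarith
        have h5 : 2 * Real.sin t * Real.cos s ≤ 0 :=
          mul_nonpos_of_nonpos_of_nonneg (by linarith) hcoss
        have habspos : 0 ≤ |Real.cos θ₀ - Real.cos θ| := abs_nonneg _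
        linarith [hsinsub, h5, mul_nonneg hdpos.le habspos]
      · have hsintpos : 0 < Real.sin t := by
          apply Real.sin_pos_of_pos_of_lt_pi htpos
          rw [ht]; linarith
        have habst : |Real.sin t| = Real.sin t := abs_of_pos hsintpos
        have hcs : Real.cos s ≤ d * Real.sin s := by
          rcases le_or_gt (Real.cos s) 0 with hc | hc
          · linarith [mul_nonneg hdpos.le hsins]
          · have hslt2 : s < π / 2 := by
              by_contra hcon
              push_neg at hcon
              have := Real.cos_nonpos_of_pi_div_two_le_of_le hcon (by linarith)
              linarith
            have hθ₀s : θ₀ ≤ s := by rw [hs]; rw [ht] at htpos; linarith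
            have h1 : Real.sin θ₀ ≤ Real.sin s :=
              Real.strictMonoOn_sin.monotoneOn ⟨by linarith, by linarith⟩
                ⟨by linarith, hslt2.le⟩ hθ₀s
            have h2 : Real.cos s ≤ Real.cos θ₀ :=
              Real.strictAntiOn_cos.antitoneOn ⟨hθ₀pos.le, by linarith⟩
                ⟨hspos.le, hslt.le⟩ hθ₀s
            rw [hcθ₀] at h2
            rw [hsθ₀] at h1
            -- cos s ≤ m/r ≤ (r²-m²)/r = d²/r = d * (d/r) ≤ d * sin s
            have hmd : m ≤ d ^ 2 := by nlinarith
            calc Real.cos s ≤ m / r := h2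
              _ ≤ d ^ 2 / r := by gcongr
              _ = d * (d / r) := by ring
              _ ≤ d * Real.sin s := by
                  linarith [mul_le_mul_of_nonneg_left h1 hdpos.le]
        rw [habs2, habst]
        linarith [hsinsub, mul_le_mul_of_nonneg_left hcs
          (by positivity : (0:ℝ) ≤ 2 * Real.sin t)]
    rw [habs, div_mul_eq_mul_div, div_le_iff₀ hdpos]
    have hds : r * Real.sin θ₀ = d := hdsin.symm
    linarith [mul_le_mul_of_nonneg_left hkey hrpos.le, hds,
      abs_nonneg (Real.cos θ₀ - Real.cos θ)]
  · -- Part 3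
    have hint : ∀ a b : ℝ, θ₁ ≤ a → a ≤ b → b ≤ 3 * π / 4 →
        Real.sin θ₁ * (b - a) ≤ Real.cos a - Real.cos b := by
      intro a b ha hab hb
      have h1 : Real.cos a - Real.cos b = ∫ u in a..b, Real.sin u :=
        (integral_sin).symm
      have h2 : (∫ _ in a..b, Real.sin θ₁) ≤ ∫ u in a..b, Real.sin u := by
        apply intervalIntegral.integral_mono_on hab intervalIntegrable_const
          (Real.continuous_sin.intervalIntegrable _ _)
        intro u hu
        exact sin_ge_aux hθ₁pos hθ₁lt ⟨le_trans ha hu.1, le_trans hu.2 hb⟩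
      rw [intervalIntegral.integral_const, smul_eq_mul] at h2
      rw [h1]
      nlinarith [h2]
    have hphi : m - r * Real.cos θ = r * (Real.cos θ₀ - Real.cos θ) := by
      rw [← hcos]; ring
    have hθsub : θ - θ₀ = β / d := by rw [hθdef]; ring
    rcases le_or_gt 0 β with hbpos | hbneg
    · have hbd : 0 ≤ β / d := div_nonneg hbpos hdpos.le
      have h := hint θ₀ θ hθ₁θ₀.le (by linarith) hθhi
      rw [hsθ₁] at h
      have hL : d / (2 * r) * (θ - θ₀) = β / (2 * r) := by
        rw [hθsub]; field_simp
      rw [hL] at h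
      have h2 : r * (β / (2 * r)) ≤ r * (Real.cos θ₀ - Real.cos θ) :=
        mul_le_mul_of_nonneg_left h hrpos.le
      have h3 : r * (β / (2 * r)) = β / 2 := by field_simp
      calc |β| / 2 = β / 2 := by rw [abs_of_nonneg hbpos]
        _ ≤ m - r * Real.cos θ := by rw [hphi]; linarith
        _ ≤ |m - r * Real.cos θ| := le_abs_self _
    · have hbd : β / d < 0 := div_neg_of_neg_of_pos hbneg hdpos
      have h := hint θ θ₀ hθlo (by linarith) (by linarith)
      rw [hsθ₁] at h
      have hL : d / (2 * r) * (θ₀ - θ) = -β / (2 * r) := by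
        rw [hθdef]; field_simp; ring
      rw [hL] at h
      have h2 : r * (-β / (2 * r)) ≤ r * (Real.cos θ - Real.cos θ₀) :=
        mul_le_mul_of_nonneg_left h hrpos.le
      have h3 : r * (-β / (2 * r)) = -β / 2 := by field_simp
      calc |β| / 2 = -β / 2 := by rw [abs_of_neg hbneg]
        _ ≤ -(m - r * Real.cos θ) := by rw [hphi]; linarith
        _ ≤ |m - r * Real.cos θ| := neg_le_abs _
end

section
/- Let r ≥ m+1, r > 1 and r/2 < m < 2r, set d = √(r²−m²) and θ₀ with r cos θ₀ = m, θ₀ ∈ (0,π/2]. For θ ∈ [θ₀, π/2], the function F(θ) = 1 + m − r cos θ − (r/d) sin θ satisfies F(θ) ≥ 0; equivalently (r/d) sin θ ≤ 1 + m − r cos θ on [θ₀, π/2]. -/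
open Real

/-- Sub-claim of the phase lemma: with `r ≥ m+1`, `r > 1`, `r/2 < m < 2r`,
`d = √(r²−m²)`, `θ₀ ∈ (0, π/2]`, `r cos θ₀ = m`, the function
`F(θ) = 1 + m − r cos θ − (r/d) sin θ` is nonnegative on `[θ₀, π/2]`;
equivalently `(r/d) sin θ ≤ 1 + m − r cos θ` there. -/
theorem phase_F_nonneg
    (m r θ₀ d : ℝ)
    (hmr : m + 1 ≤ r) (hr : 1 < r) (hm1 : r / 2 < m) (hm2 : m < 2 * r)
    (hd : d = Real.sqrt (r ^ 2 - m ^ 2))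
    (hθ₀ : θ₀ ∈ Set.Ioc 0 (π / 2)) (hcos : r * Real.cos θ₀ = m) :
    ∀ θ ∈ Set.Icc θ₀ (π / 2),
      r / d * Real.sin θ ≤ 1 + m - r * Real.cos θ := by
  intro θ hθ
  obtain ⟨hθ1, hθ2⟩ := hθ
  obtain ⟨hθ₀1, hθ₀2⟩ := hθ₀
  have hm0 : 0 < m := by nlinarith
  have hr0 : 0 < r := by linarith
  have hd2 : d ^ 2 = r ^ 2 - m ^ 2 := by
    rw [hd, Real.sq_sqrt]; nlinarith
  have hd0 : 0 < d := by
    rw [hd]; apply Real.sqrt_pos.2; nlinarith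
  have hθpos : 0 < θ := lt_of_lt_of_le hθ₀1 hθ1
  have hcosθ : r * Real.cos θ ≤ m := by
    rw [← hcos]
    have : Real.cos θ ≤ Real.cos θ₀ :=
      Real.cos_le_cos_of_nonneg_of_le_pi (le_of_lt hθ₀1)
        (by linarith [Real.pi_pos]) hθ1
    nlinarith
  have hsin : 0 ≤ Real.sin θ := Real.sin_nonneg_of_nonneg_of_le_pi
    (le_of_lt hθpos) (by linarith [Real.pi_pos])
  have hcos0 : 0 ≤ Real.cos θ := Real.cos_nonneg_of_mem_Icc
    ⟨by linarith [Real.pi_pos], hθ2⟩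
  set s := Real.sin θ
  set c := Real.cos θ
  have hsc : s ^ 2 + c ^ 2 = 1 := Real.sin_sq_add_cos_sq θ
  have hrhs : (0:ℝ) < d * (1 + m - r * c) := by
    apply mul_pos hd0; linarith
  have hsq : (r * s) ^ 2 ≤ (d * (1 + m - r * c)) ^ 2 := by
    have hdm : m ≤ d ^ 2 := by nlinarith
    nlinarith [mul_nonneg (sub_nonneg.2 hcosθ)
      (show (0:ℝ) ≤ d ^ 2 * (2 + m - r * c) - (r * c + m) by nlinarith),
      mul_nonneg hr0.le hsin]
  have key : r * s ≤ d * (1 + m - r * c) := by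
    have := abs_le_of_sq_le_sq' hsq hrhs.le
    exact this.2
  rw [div_mul_eq_mul_div, div_le_iff₀ hd0]
  nlinarith [key]
end

section
/- Let α ∈ 𝒮(ℝ), N ∈ ℕ, and suppose r ≥ 1 and m ∈ ℝ with r < m + 1 and r/2 < m < 2r. Then |∫₀^{3π/4} e^{−ikθ} α̂(m − r cos θ) dθ| ≤ C_N r^{−1/2} ⟨r − m⟩^{−N} for a constant C_N independent of k ∈ ℤ, m and r. -/
open Real SchwartzMap FourierTransform Complex


lemma osc_aux_decay (g : SchwartzMap ℝ ℂ) (N : ℕ) :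
    ∃ D : ℝ, 0 < D ∧ ∀ x : ℝ, ‖g x‖ * (1 + x ^ 2) ^ (((N : ℝ) + 2) / 2) ≤ D := by
  refine ⟨2 ^ (N + 2) * (Finset.Iic ((N+2 : ℕ), (0 : ℕ))).sup
      (fun m => SchwartzMap.seminorm ℝ m.1 m.2) g + 1, by positivity, fun x => ?_⟩
  have h1 : (1 + ‖x‖) ^ (N + 2) * ‖iteratedFDeriv ℝ 0 g x‖ ≤
      2 ^ (N + 2) * (Finset.Iic ((N+2 : ℕ), (0 : ℕ))).sup
        (fun m => SchwartzMap.seminorm ℝ m.1 m.2) g :=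
    SchwartzMap.one_add_le_sup_seminorm_apply (m := ((N+2 : ℕ), (0:ℕ))) le_rfl le_rfl g x
  rw [norm_iteratedFDeriv_zero] at h1
  have h2 : (1 + x ^ 2) ^ (((N : ℝ) + 2) / 2) ≤ (1 + ‖x‖) ^ (N + 2) := by
    have hb : (1 + x ^ 2) ^ ((1 : ℝ) / 2) ≤ 1 + ‖x‖ := by
      rw [← Real.sqrt_eq_rpow]
      have h : (1 : ℝ) + x ^ 2 ≤ (1 + ‖x‖) ^ 2 := by
        have : ‖x‖ ^ 2 = x ^ 2 := by simp [_root_.sq_abs, Real.norm_eq_abs]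
        nlinarith [norm_nonneg x]
      calc √(1 + x ^ 2) ≤ √((1 + ‖x‖) ^ 2) := Real.sqrt_le_sqrt h
        _ = 1 + ‖x‖ := Real.sqrt_sq (by positivity)
    calc (1 + x ^ 2) ^ (((N : ℝ) + 2) / 2)
        = ((1 + x ^ 2) ^ ((1 : ℝ) / 2)) ^ (N + 2) := by
          rw [← Real.rpow_natCast ((1 + x ^ 2) ^ ((1:ℝ)/2)) (N + 2),
            ← Real.rpow_mul (by positivity)]
          push_cast; ring_nf
      _ ≤ (1 + ‖x‖) ^ (N + 2) := pow_le_pow_left₀ (by positivity) hb _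
  nlinarith [norm_nonneg (g x),
    Real.rpow_nonneg (show (0:ℝ) ≤ 1 + x ^ 2 by positivity) (((N : ℝ) + 2) / 2),
    pow_nonneg (show (0:ℝ) ≤ 1 + ‖x‖ by positivity) (N+2)]

lemma osc_aux_geom (m r θ : ℝ) (hr : 1 ≤ r) (hrm1 : r < m + 1)
    (hθ0 : 0 ≤ θ) (hθπ : θ ≤ π) :
    1 + (r - m) ^ 2 ≤ 2 * (1 + (m - r * Real.cos θ) ^ 2) ∧
    (π + Real.sqrt r * θ) ^ 2 ≤ 4 * π ^ 2 * (1 + (m - r * Real.cos θ) ^ 2) := by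
  have pi_pos := Real.pi_pos
  set x : ℝ := m - r * Real.cos θ with hxdef
  set A : ℝ := 1 + x ^ 2 with hAdef
  have hA1 : (1 : ℝ) ≤ A := by nlinarith [sq_nonneg x]
  have hcos1 : Real.cos θ ≤ 1 := Real.cos_le_one θ
  constructor
  · rcases le_or_gt r m with h | h
    · have hx1 : m - r ≤ x := by rw [hxdef]; nlinarith
      have hx0 : 0 ≤ m - r := by linarith
      rw [hAdef]; nlinarith
    · have h1 : r - m < 1 := by linarith
      have h2 : 0 < r - m := by linarith
      rw [hAdef]; nlinarith [sq_nonneg x]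
  · have hπ2 : (0:ℝ) < π ^ 2 := by positivity
    have hcos : Real.cos θ ≤ 1 - 2 / π ^ 2 * θ ^ 2 :=
      Real.cos_le_one_sub_mul_cos_sq (by rw [_root_.abs_of_nonneg hθ0]; exact hθπ)
    have hclaim2 : r * θ ^ 2 ≤ π ^ 2 * A := by
      have hx : 2 * r * θ ^ 2 / π ^ 2 - 1 ≤ x := by
        have h := mul_le_mul_of_nonneg_left hcos (show (0:ℝ) ≤ r by linarith)
        have he : r * (1 - 2 / π ^ 2 * θ ^ 2) = r - 2 * r * θ ^ 2 / π ^ 2 := by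
          field_simp
        rw [he] at h
        rw [hxdef]; linarith
      set t : ℝ := 2 * r * θ ^ 2 / π ^ 2 with htdef
      have ht0 : 0 ≤ t := by positivity
      have hgoal : t / 2 ≤ A := by
        rcases le_or_gt t 2 with h | h
        · linarith
        · have hx1 : (1:ℝ) ≤ x := by linarith
          rw [hAdef]
          nlinarith [mul_nonneg (show (0:ℝ) ≤ x - (t - 1) by linarith)
              (show (0:ℝ) ≤ x by linarith),
            mul_nonneg (show (0:ℝ) ≤ x - (t - 1) by linarith)
              (show (0:ℝ) ≤ t - 1 by linarith)]
      have hrt : r * θ ^ 2 = t / 2 * π ^ 2 := by rw [htdef]; field_simp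
      rw [hrt]
      nlinarith
    have hs0 : 0 ≤ Real.sqrt r := Real.sqrt_nonneg r
    have hsq : Real.sqrt r ^ 2 = r := Real.sq_sqrt (by linarith)
    have hu0 : 0 ≤ Real.sqrt r * θ := by positivity
    have hu2 : (Real.sqrt r * θ) ^ 2 = r * θ ^ 2 := by rw [mul_pow, hsq]
    have hA0 : (0:ℝ) ≤ A := by linarith
    have hsqle : (Real.sqrt r * θ) ^ 2 ≤ (π * A) ^ 2 := by
      have hAA : π ^ 2 * A ≤ π ^ 2 * A ^ 2 := by nlinarith
      nlinarith
    have h2 : Real.sqrt r * θ ≤ π * A := by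
      calc Real.sqrt r * θ = √((Real.sqrt r * θ) ^ 2) := (Real.sqrt_sq hu0).symm
        _ ≤ √((π * A) ^ 2) := Real.sqrt_le_sqrt hsqle
        _ = π * A := Real.sqrt_sq (by positivity)
    nlinarith

lemma osc_aux_rpow (N : ℕ) (A B u : ℝ) (hA1 : 1 ≤ A) (hB0 : 0 < B) (hu : 0 < u)
    (h1 : B ≤ 2 * A) (h2 : u ^ 2 ≤ 4 * π ^ 2 * A) :
    (A ^ (((N : ℝ) + 2) / 2))⁻¹ ≤
      2 ^ ((N : ℝ) / 2) * B ^ (-(N : ℝ) / 2) * (4 * π ^ 2) * (u ^ 2)⁻¹ := by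
  have pi_pos := Real.pi_pos
  have hA0 : (0:ℝ) < A := by linarith
  have hinv : (A ^ (((N : ℝ) + 2) / 2))⁻¹ = A ^ (-(N:ℝ) / 2) * A⁻¹ := by
    rw [← Real.rpow_neg hA0.le, show -(((N:ℝ) + 2) / 2) = -(N:ℝ) / 2 + (-1) by ring,
      Real.rpow_add hA0, Real.rpow_neg_one]
  rw [hinv]
  have hF1 : A ^ (-(N:ℝ) / 2) ≤ 2 ^ ((N:ℝ) / 2) * B ^ (-(N:ℝ) / 2) := by
    have hexp : -(N:ℝ) / 2 ≤ 0 := by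
      have : (0:ℝ) ≤ (N:ℝ) := Nat.cast_nonneg N
      linarith
    calc A ^ (-(N:ℝ) / 2) ≤ (B / 2) ^ (-(N:ℝ) / 2) :=
          Real.rpow_le_rpow_of_nonpos (by positivity) (by linarith) hexp
      _ = 2 ^ ((N:ℝ) / 2) * B ^ (-(N:ℝ) / 2) := by
          rw [Real.div_rpow hB0.le (by norm_num : (0:ℝ) ≤ 2), div_eq_mul_inv,
            ← Real.rpow_neg (by norm_num : (0:ℝ) ≤ 2),
            show -(-(N:ℝ) / 2) = (N:ℝ) / 2 by ring]
          ring
  have hF2 : A⁻¹ ≤ 4 * π ^ 2 * (u ^ 2)⁻¹ := by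
    have hd : 0 < u ^ 2 := pow_pos hu 2
    have hdiv : u ^ 2 / (4 * π ^ 2) ≤ A := by
      rw [div_le_iff₀ (by positivity)]; linarith
    have h := one_div_le_one_div_of_le (by positivity) hdiv
    rw [one_div, one_div, inv_div] at h
    calc A⁻¹ ≤ 4 * π ^ 2 / u ^ 2 := h
      _ = 4 * π ^ 2 * (u ^ 2)⁻¹ := by rw [div_eq_mul_inv]
  calc A ^ (-(N:ℝ) / 2) * A⁻¹
      ≤ (2 ^ ((N:ℝ) / 2) * B ^ (-(N:ℝ) / 2)) * (4 * π ^ 2 * (u ^ 2)⁻¹) := by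
        apply mul_le_mul hF1 hF2 (by positivity) (by positivity)
    _ = 2 ^ ((N : ℝ) / 2) * B ^ (-(N : ℝ) / 2) * (4 * π ^ 2) * (u ^ 2)⁻¹ := by ring

lemma osc_aux_int (r T : ℝ) (hr : 1 ≤ r) (hT : 0 ≤ T) :
    ∫ θ in (0:ℝ)..T, ((π + Real.sqrt r * θ) ^ 2)⁻¹ ≤ (Real.sqrt r)⁻¹ * π⁻¹ := by
  have pi_pos := Real.pi_pos
  have hs : 0 < Real.sqrt r := Real.sqrt_pos.2 (by linarith)
  have hpos : ∀ θ : ℝ, 0 ≤ θ → 0 < π + Real.sqrt r * θ := fun θ hθ => by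
    nlinarith [hs.le]
  have hcont : ContinuousOn (fun θ : ℝ => ((π + Real.sqrt r * θ) ^ 2)⁻¹) (Set.uIcc 0 T) := by
    apply ContinuousOn.inv₀ (by fun_prop)
    intro θ hθ
    rw [Set.uIcc_of_le hT] at hθ
    exact (pow_pos (hpos θ hθ.1) 2).ne'
  have hint : IntervalIntegrable (fun θ : ℝ => ((π + Real.sqrt r * θ) ^ 2)⁻¹)
      MeasureTheory.volume 0 T := hcont.intervalIntegrable
  have hderiv : ∀ θ ∈ Set.uIcc (0:ℝ) T,
      HasDerivAt (fun θ : ℝ => -((Real.sqrt r)⁻¹ * (π + Real.sqrt r * θ)⁻¹))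
        (((π + Real.sqrt r * θ) ^ 2)⁻¹) θ := by
    intro θ hθ
    rw [Set.uIcc_of_le hT] at hθ
    have hne : π + Real.sqrt r * θ ≠ 0 := (hpos θ hθ.1).ne'
    have h1 : HasDerivAt (fun θ : ℝ => π + Real.sqrt r * θ) (Real.sqrt r) θ := by
      simpa using ((hasDerivAt_id θ).const_mul (Real.sqrt r)).const_add π
    have h2 := (h1.inv hne).const_mul (-(Real.sqrt r)⁻¹)
    convert h2 using 1
    · ext y; ring
    · rfl
    · ext y; simp only [Pi.inv_apply]; ring
    · field_simp
  rw [intervalIntegral.integral_eq_sub_of_hasDerivAt hderiv hint]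
  have h4 : 0 < π + Real.sqrt r * T := hpos T hT
  have heq : -((Real.sqrt r)⁻¹ * (π + Real.sqrt r * T)⁻¹)
      - -((Real.sqrt r)⁻¹ * (π + Real.sqrt r * 0)⁻¹)
      = (Real.sqrt r)⁻¹ * π⁻¹ - (Real.sqrt r)⁻¹ * (π + Real.sqrt r * T)⁻¹ := by
    rw [mul_zero, add_zero]; ring
  rw [heq]
  have hb : 0 ≤ (Real.sqrt r)⁻¹ * (π + Real.sqrt r * T)⁻¹ := by positivity
  linarith

/-- Lemma `mainest2`, first case: for a Schwartz function `α` and `N ∈ ℕ` there is `C_N`,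
independent of `k ∈ ℤ`, `m` and `r`, such that whenever `r ≥ 1`, `r < m+1` and `r/2 < m < 2r`,
`|∫₀^{3π/4} e^{−ikθ} α̂(m − r cos θ) dθ| ≤ C_N r^{−1/2} ⟨r − m⟩^{−N}`. -/
theorem oscillatory_bessel_easy_case (α : SchwartzMap ℝ ℂ) (N : ℕ) :
    ∃ C : ℝ, 0 < C ∧ ∀ (k : ℤ) (m r : ℝ), 1 ≤ r → r < m + 1 → r / 2 < m → m < 2 * r →
      ‖∫ θ in (0:ℝ)..(3 * π / 4),
          Complex.exp (-Complex.I * (k : ℂ) * (θ : ℂ)) * 𝓕 (⇑α) (m - r * Real.cos θ)‖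
        ≤ C * r ^ (-(1/2) : ℝ) * (1 + (r - m) ^ 2) ^ (-(N : ℝ) / 2) := by
  have pi_pos := Real.pi_pos
  obtain ⟨D, hD0, hD⟩ := osc_aux_decay (SchwartzMap.fourierTransformCLM ℝ α) N
  have hgeq : 𝓕 (⇑α) = ⇑(SchwartzMap.fourierTransformCLM ℝ α) :=
    rfl
  refine ⟨D * 2 ^ ((N : ℝ) / 2) * (4 * π), by positivity, fun k m r hr hrm1 hrm2 hrm3 => ?_⟩
  have hT : (0:ℝ) ≤ 3 * π / 4 := by positivity
  have hs : 0 < Real.sqrt r := Real.sqrt_pos.2 (by linarith)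
  have hpos : ∀ θ : ℝ, 0 ≤ θ → 0 < π + Real.sqrt r * θ := fun θ hθ => by
    nlinarith [hs.le]
  have hB0 : (0:ℝ) < 1 + (r - m) ^ 2 := by positivity
  set K : ℝ := D * 2 ^ ((N : ℝ) / 2) * ((1 + (r - m) ^ 2) ^ (-(N : ℝ) / 2)) * (4 * π ^ 2)
    with hKdef
  have hK0 : 0 < K := by positivity
  -- pointwise bound
  have hpt : ∀ θ ∈ Set.Icc (0:ℝ) (3 * π / 4),
      ‖Complex.exp (-Complex.I * (k : ℂ) * (θ : ℂ)) * 𝓕 (⇑α) (m - r * Real.cos θ)‖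
        ≤ K * ((π + Real.sqrt r * θ) ^ 2)⁻¹ := by
    intro θ hθ
    obtain ⟨hθ0, hθT⟩ := hθ
    have hθπ : θ ≤ π := by linarith
    obtain ⟨hgeom1, hgeom2⟩ := osc_aux_geom m r θ hr hrm1 hθ0 hθπ
    have hA1 : (1:ℝ) ≤ 1 + (m - r * Real.cos θ) ^ 2 := by nlinarith [sq_nonneg (m - r * Real.cos θ)]
    have hnorm : ‖Complex.exp (-Complex.I * (k : ℂ) * (θ : ℂ)) *
        𝓕 (⇑α) (m - r * Real.cos θ)‖ = ‖(SchwartzMap.fourierTransformCLM ℝ α) (m - r * Real.cos θ)‖ := by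
      rw [hgeq, norm_mul]
      have he : (-Complex.I * (k : ℂ) * (θ : ℂ)) = ((-((k : ℝ) * θ) : ℝ) : ℂ) * Complex.I := by
        push_cast; ring
      rw [he, Complex.norm_exp_ofReal_mul_I, one_mul]
    rw [hnorm]
    have hbound : ‖(SchwartzMap.fourierTransformCLM ℝ α) (m - r * Real.cos θ)‖
        ≤ D * ((1 + (m - r * Real.cos θ) ^ 2) ^ (((N:ℝ) + 2) / 2))⁻¹ := by
      have h := hD (m - r * Real.cos θ)
      have hApow : 0 < (1 + (m - r * Real.cos θ) ^ 2) ^ (((N:ℝ) + 2) / 2) :=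
        Real.rpow_pos_of_pos (by linarith) _
      rw [← div_eq_mul_inv, le_div_iff₀ hApow]
      exact h
    have hrp := osc_aux_rpow N (1 + (m - r * Real.cos θ) ^ 2) (1 + (r - m) ^ 2)
      (π + Real.sqrt r * θ) hA1 hB0 (hpos θ hθ0) hgeom1 hgeom2
    calc ‖(SchwartzMap.fourierTransformCLM ℝ α) (m - r * Real.cos θ)‖
        ≤ D * ((1 + (m - r * Real.cos θ) ^ 2) ^ (((N:ℝ) + 2) / 2))⁻¹ := hbound
      _ ≤ D * (2 ^ ((N : ℝ) / 2) * (1 + (r - m) ^ 2) ^ (-(N : ℝ) / 2) * (4 * π ^ 2) *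
            ((π + Real.sqrt r * θ) ^ 2)⁻¹) := by
          exact mul_le_mul_of_nonneg_left hrp hD0.le
      _ = K * ((π + Real.sqrt r * θ) ^ 2)⁻¹ := by rw [hKdef]; ring
  -- integrability of the bound
  have hGint : IntervalIntegrable (fun θ : ℝ => K * ((π + Real.sqrt r * θ) ^ 2)⁻¹)
      MeasureTheory.volume 0 (3 * π / 4) := by
    apply ContinuousOn.intervalIntegrable
    apply ContinuousOn.mul continuousOn_const
    apply ContinuousOn.inv₀ (by fun_prop)
    intro θ hθ
    rw [Set.uIcc_of_le hT] at hθ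
    exact (pow_pos (hpos θ hθ.1) 2).ne'
  have hae : ∀ᵐ (t : ℝ) ∂(MeasureTheory.volume.restrict (Set.uIoc (0:ℝ) (3 * π / 4))),
      ‖Complex.exp (-Complex.I * (k : ℂ) * (t : ℂ)) * 𝓕 (⇑α) (m - r * Real.cos t)‖
        ≤ K * ((π + Real.sqrt r * t) ^ 2)⁻¹ := by
    refine (MeasureTheory.ae_restrict_mem measurableSet_uIoc).mono fun t ht => ?_
    rw [Set.uIoc_of_le hT] at ht
    exact hpt t ⟨ht.1.le, ht.2⟩
  have h1 := intervalIntegral.norm_integral_le_abs_of_norm_le hae hGint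
  have hInn : 0 ≤ ∫ θ in (0:ℝ)..(3 * π / 4), ((π + Real.sqrt r * θ) ^ 2)⁻¹ :=
    intervalIntegral.integral_nonneg hT fun u _ => by positivity
  have h2 : |∫ θ in (0:ℝ)..(3 * π / 4), K * ((π + Real.sqrt r * θ) ^ 2)⁻¹|
      ≤ K * ((Real.sqrt r)⁻¹ * π⁻¹) := by
    rw [intervalIntegral.integral_const_mul, abs_mul, abs_of_pos hK0, _root_.abs_of_nonneg hInn]
    exact mul_le_mul_of_nonneg_left (osc_aux_int r (3 * π / 4) hr hT) hK0.le
  have hfinal : K * ((Real.sqrt r)⁻¹ * π⁻¹)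
      = D * 2 ^ ((N : ℝ) / 2) * (4 * π) * r ^ (-(1/2) : ℝ) *
        (1 + (r - m) ^ 2) ^ (-(N : ℝ) / 2) := by
    have hrpow : r ^ (-(1/2) : ℝ) = (Real.sqrt r)⁻¹ := by
      rw [Real.rpow_neg (by linarith : (0:ℝ) ≤ r), Real.sqrt_eq_rpow]
    rw [hrpow, hKdef]
    field_simp
  calc ‖∫ θ in (0:ℝ)..(3 * π / 4),
        Complex.exp (-Complex.I * (k : ℂ) * (θ : ℂ)) * 𝓕 (⇑α) (m - r * Real.cos θ)‖
      ≤ |∫ θ in (0:ℝ)..(3 * π / 4), K * ((π + Real.sqrt r * θ) ^ 2)⁻¹| := h1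
    _ ≤ K * ((Real.sqrt r)⁻¹ * π⁻¹) := h2
    _ = _ := hfinal
end
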